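/- arXiv:math/0602327 — 6 statements merged into one kernel-verified Lean document; each statement's English description precedes it below -/
import Mathlib

section
/- Every matrix A ∈ GL₂(ℤ) satisfies exactly one of the following five conditions: (i) A = I₂; (ii) A = −I₂; (iii) A ≠ −I₂ and A does not have 1 as an eigenvalue; (iv) A is conjugate in GL₂(ℤ) to [[1,k],[0,−1]] for some integer k; (v) A is conjugate in GL₂(ℤ) to [[1,k],[0,1]] for some nonzero integer k. -/
open Multiplicative

/-- Conjugacy of integer matrices within `GL₂(ℤ)`: `A` and `B` are conjugate in
`GL₂(ℤ)` iff `P * A = B * P` for some integer matrix `P` invertible over `ℤ`. -/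
def ConjGL2 (A B : Matrix (Fin 2) (Fin 2) ℤ) : Prop :=
  ∃ P : Matrix (Fin 2) (Fin 2) ℤ, IsUnit P.det ∧ P * A = B * P

namespace Stmt5Aux

lemma conj_det {A B : Matrix (Fin 2) (Fin 2) ℤ} (h : ConjGL2 A B) : A.det = B.det := by
  obtain ⟨P, hP, hPA⟩ := h
  have h0 : P.det ≠ 0 := hP.ne_zero
  have := congrArg Matrix.det hPA
  rw [Matrix.det_mul, Matrix.det_mul] at this
  exact mul_left_cancel₀ h0 (by rw [this, mul_comm])

lemma conj_sub_one_det {A B : Matrix (Fin 2) (Fin 2) ℤ} (h : ConjGL2 A B) :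
    (A - 1).det = (B - 1).det := by
  obtain ⟨P, hP, hPA⟩ := h
  have h0 : P.det ≠ 0 := hP.ne_zero
  have hPA' : P * (A - 1) = (B - 1) * P := by
    rw [Matrix.mul_sub, Matrix.sub_mul, hPA, Matrix.mul_one, Matrix.one_mul]
  have := congrArg Matrix.det hPA'
  rw [Matrix.det_mul, Matrix.det_mul] at this
  exact mul_left_cancel₀ h0 (by rw [this, mul_comm])

lemma conj_one {A B : Matrix (Fin 2) (Fin 2) ℤ} (h : ConjGL2 A B) (hA : A = 1) : B = 1 := by
  obtain ⟨P, hP, hPA⟩ := h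
  have : Invertible P := P.invertibleOfIsUnitDet hP
  subst hA
  rw [Matrix.mul_one] at hPA
  calc B = B * P * ⅟P := by rw [Matrix.mul_assoc, mul_invOf_self, Matrix.mul_one]
  _ = 1 := by rw [← hPA, mul_invOf_self]

lemma conj_neg_one {A B : Matrix (Fin 2) (Fin 2) ℤ} (h : ConjGL2 A B) (hA : A = -1) :
    B = -1 := by
  obtain ⟨P, hP, hPA⟩ := h
  have : Invertible P := P.invertibleOfIsUnitDet hP
  subst hA
  have hPA' : B * P = -P := by rw [← hPA]; simp
  calc B = B * P * ⅟P := by rw [Matrix.mul_assoc, mul_invOf_self, Matrix.mul_one]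
  _ = -1 := by rw [hPA']; simp

lemma primitive (a b c e X Y : ℤ) (hXY : ¬(X = 0 ∧ Y = 0))
    (H1 : (a - 1) * X + b * Y = 0) (H2 : c * X + (e - a) * Y = 0) :
    ∃ x y u w : ℤ, x * w - y * u = 1 ∧ (a - 1) * x + b * y = 0 ∧ c * x + (e - a) * y = 0 := by
  have hg0 : Int.gcd X Y ≠ 0 := by
    rw [Ne, Int.gcd_eq_zero_iff]; exact hXY
  have hgpos : 0 < Int.gcd X Y := Nat.pos_of_ne_zero hg0
  have hgz : (Int.gcd X Y : ℤ) ≠ 0 := Int.natCast_ne_zero.mpr hg0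
  set g : ℤ := (Int.gcd X Y : ℤ) with hgdef
  set x := X / g with hx
  set y := Y / g with hy
  have hX : g * x = X := Int.mul_ediv_cancel' (Int.gcd_dvd_left X Y)
  have hY : g * y = Y := Int.mul_ediv_cancel' (Int.gcd_dvd_right X Y)
  have hcop : Int.gcd x y = 1 := Int.gcd_div_gcd_div_gcd hgpos
  refine ⟨x, y, -(Int.gcdB x y), Int.gcdA x y, ?_, ?_, ?_⟩
  · have := Int.gcd_eq_gcd_ab x y
    rw [hcop] at this
    push_cast at this
    linarith [this]
  · have hh : g * ((a - 1) * x + b * y) = 0 := by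
      rw [← H1, ← hX, ← hY]; ring
    exact (mul_eq_zero.mp hh).resolve_left hgz
  · have hh : g * (c * x + (e - a) * y) = 0 := by
      rw [← H2, ← hX, ← hY]; ring
    exact (mul_eq_zero.mp hh).resolve_left hgz

lemma key (a b c d e x y u w : ℤ)
    (hbez : x * w - y * u = 1)
    (h1 : (a - 1) * x + b * y = 0)
    (h2 : c * x + (e - a) * y = 0)
    (hd : d = 1 + e - a) :
    ∃ k : ℤ, ConjGL2 !![a, b; c, d] !![1, k; 0, e] ∧
      (e = 1 → k = 0 → !![a, b; c, d] = (1 : Matrix (Fin 2) (Fin 2) ℤ)) := by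
  have hpq : ((a - e) * u + b * w) * y = (c * u + (1 - a) * w) * x := by
    linear_combination (-u) * h2 + w * h1
  have hk1 : (((a - e) * u + b * w) * w - (c * u + (1 - a) * w) * u) * x
      = (a - e) * u + b * w := by
    linear_combination ((a - e) * u + b * w) * hbez + u * hpq
  have hk2 : (((a - e) * u + b * w) * w - (c * u + (1 - a) * w) * u) * y
      = c * u + (1 - a) * w := by
    linear_combination (c * u + (1 - a) * w) * hbez + w * hpq
  refine ⟨((a - e) * u + b * w) * w - (c * u + (1 - a) * w) * u,
    ⟨!![w, -u; -y, x], ?_, ?_⟩, ?_⟩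
  · have hdet : (!![w, -u; -y, x]).det = 1 := by
      simp [Matrix.det_fin_two_of]; linarith
    rw [hdet]; exact isUnit_one
  · rw [Matrix.mul_fin_two, Matrix.mul_fin_two]
    ext i j
    fin_cases i <;> fin_cases j <;> simp
    · linear_combination hk2
    · linear_combination -hk1 - u * hd
    · linear_combination h2
    · linear_combination -h1 + x * hd
  · intro he hk
    rw [hk] at hk1 hk2
    rw [he] at hk1 h2
    have hp0 : (a - 1) * u + b * w = 0 := by linear_combination -hk1
    have hq0 : c * u + (1 - a) * w = 0 := by linear_combination -hk2
    have ha1 : a = 1 := by linear_combination (1 - a) * hbez + w * h1 + (-y) * hp0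
    have hb0 : b = 0 := by
      rw [ha1] at h1 hp0
      linear_combination -b * hbez + x * hp0 - u * h1
    have hc0 : c = 0 := by
      rw [ha1] at h2 hq0
      linear_combination -c * hbez + w * h2 - y * hq0
    rw [ha1, hb0, hc0, hd, he, ha1]
    norm_num
    ext i j
    fin_cases i <;> fin_cases j <;> simp [Matrix.one_apply]

lemma construct (A : Matrix (Fin 2) (Fin 2) ℤ) (e : ℤ) (hdetA : A.det = e)
    (hdet1 : (A - 1).det = 0) (hne1 : A ≠ 1) :
    ∃ k : ℤ, ConjGL2 A !![1, k; 0, e] ∧ (e = 1 → k = 0 → A = 1) := by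
  set a := A 0 0 with ha'
  set b := A 0 1 with hb'
  set c := A 1 0 with hc'
  set d := A 1 1 with hd'
  have hAeta : A = !![a, b; c, d] := by
    rw [ha', hb', hc', hd']; exact Matrix.eta_fin_two A
  have hsub : A - 1 = !![a - 1, b; c, d - 1] := by
    ext i j
    fin_cases i <;> fin_cases j <;> simp [hAeta, Matrix.one_apply]
  have hdetA' : a * d - b * c = e := by
    rw [hAeta] at hdetA; simpa [Matrix.det_fin_two_of] using hdetA
  have hdet1' : (a - 1) * (d - 1) - b * c = 0 := by
    rw [hsub] at hdet1; simpa [Matrix.det_fin_two_of] using hdet1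
  have hd2 : d = 1 + e - a := by linear_combination hdetA' - hdet1'
  have hbc : b * c = -(a - 1) * (a - e) := by linear_combination hd2 * a - hdetA'
  have hcand : ∃ X Y : ℤ, ¬(X = 0 ∧ Y = 0) ∧ (a - 1) * X + b * Y = 0 ∧
      c * X + (e - a) * Y = 0 := by
    by_cases hb1 : b = 0 ∧ 1 - a = 0
    · refine ⟨a - e, c, ?_, by linear_combination hbc, by ring⟩
      rintro ⟨hae, hc0⟩
      apply hne1
      have ha1 : a = 1 := by linarith [hb1.2]
      have he1 : e = 1 := by linarith
      have : d = 1 := by rw [hd2, he1, ha1]; ring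
      rw [hAeta, ha1, hb1.1, hc0, this]
      ext i j
      fin_cases i <;> fin_cases j <;> simp [Matrix.one_apply]
    · exact ⟨b, 1 - a, hb1, by ring, by linear_combination hbc⟩
  obtain ⟨X, Y, hXY, H1, H2⟩ := hcand
  obtain ⟨x, y, u, w, hbez, h1, h2⟩ := primitive a b c e X Y hXY H1 H2
  obtain ⟨k, hconj, hk⟩ := key a b c d e x y u w hbez h1 h2 hd2
  rw [← hAeta] at hconj hk
  exact ⟨k, hconj, hk⟩

lemma B4_det (k : ℤ) : (!![1, k; 0, -1] : Matrix (Fin 2) (Fin 2) ℤ).det = -1 := by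
  simp [Matrix.det_fin_two_of]

lemma B5_det (k : ℤ) : (!![1, k; 0, 1] : Matrix (Fin 2) (Fin 2) ℤ).det = 1 := by
  simp [Matrix.det_fin_two_of]

lemma B4_sub_det (k : ℤ) : ((!![1, k; 0, -1] : Matrix (Fin 2) (Fin 2) ℤ) - 1).det = 0 := by
  have : (!![1, k; 0, -1] : Matrix (Fin 2) (Fin 2) ℤ) - 1 = !![0, k; 0, -2] := by
    ext i j
    fin_cases i <;> fin_cases j <;> simp [Matrix.one_apply]
  rw [this]
  simp [Matrix.det_fin_two_of]

lemma B5_sub_det (k : ℤ) : ((!![1, k; 0, 1] : Matrix (Fin 2) (Fin 2) ℤ) - 1).det = 0 := by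
  have : (!![1, k; 0, 1] : Matrix (Fin 2) (Fin 2) ℤ) - 1 = !![0, k; 0, 0] := by
    ext i j
    fin_cases i <;> fin_cases j <;> simp [Matrix.one_apply]
  rw [this]
  simp [Matrix.det_fin_two_of]

lemma B4_ne_one (k : ℤ) : (!![1, k; 0, -1] : Matrix (Fin 2) (Fin 2) ℤ) ≠ 1 := by
  intro h
  have := congrFun (congrFun h 1) 1
  simp [Matrix.one_apply] at this

lemma B4_ne_neg_one (k : ℤ) : (!![1, k; 0, -1] : Matrix (Fin 2) (Fin 2) ℤ) ≠ -1 := by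
  intro h
  have := congrFun (congrFun h 0) 0
  simp [Matrix.one_apply] at this

lemma B5_ne_neg_one (k : ℤ) : (!![1, k; 0, 1] : Matrix (Fin 2) (Fin 2) ℤ) ≠ -1 := by
  intro h
  have := congrFun (congrFun h 0) 0
  simp [Matrix.one_apply] at this

lemma B5_eq_one {k : ℤ} (h : (!![1, k; 0, 1] : Matrix (Fin 2) (Fin 2) ℤ) = 1) : k = 0 := by
  have := congrFun (congrFun h 0) 1
  simpa [Matrix.one_apply] using this

lemma one_ne_neg_one : (1 : Matrix (Fin 2) (Fin 2) ℤ) ≠ -1 := by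
  intro h
  have := congrFun (congrFun h 0) 0
  simp [Matrix.one_apply] at this

end Stmt5Aux

open Stmt5Aux in
/-- Every matrix in `GL₂(ℤ)` (i.e. every integer matrix invertible over `ℤ`) satisfies
exactly one of the five listed conditions. -/
theorem stmt5 (A : Matrix (Fin 2) (Fin 2) ℤ) (hA : IsUnit A.det) :
    ∃! i : Fin 5,
      ![A = 1,
        A = -1,
        A ≠ -1 ∧ (A - 1).det ≠ 0,
        ∃ k : ℤ, ConjGL2 A !![1, k; 0, -1],
        ∃ k : ℤ, k ≠ 0 ∧ ConjGL2 A !![1, k; 0, 1]] i := by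
  by_cases h1 : A = 1
  · refine ⟨0, h1, ?_⟩
    intro j hj
    fin_cases j
    · rfl
    · exact absurd (h1 ▸ (hj : A = -1)) one_ne_neg_one
    · exact absurd (by rw [h1]; simp : (A - 1).det = 0) (hj : A ≠ -1 ∧ (A - 1).det ≠ 0).2
    · obtain ⟨k, hc⟩ := (hj : ∃ k : ℤ, ConjGL2 A !![1, k; 0, -1])
      exact absurd (conj_one hc h1) (B4_ne_one k)
    · obtain ⟨k, hk, hc⟩ := (hj : ∃ k : ℤ, k ≠ 0 ∧ ConjGL2 A !![1, k; 0, 1])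
      exact absurd (B5_eq_one (conj_one hc h1)) hk
  · by_cases h2 : A = -1
    · refine ⟨1, h2, ?_⟩
      intro j hj
      fin_cases j
      · exact absurd (hj : A = 1) h1
      · rfl
      · exact absurd h2 (hj : A ≠ -1 ∧ (A - 1).det ≠ 0).1
      · obtain ⟨k, hc⟩ := (hj : ∃ k : ℤ, ConjGL2 A !![1, k; 0, -1])
        exact absurd (conj_neg_one hc h2) (B4_ne_neg_one k)
      · obtain ⟨k, hk, hc⟩ := (hj : ∃ k : ℤ, k ≠ 0 ∧ ConjGL2 A !![1, k; 0, 1])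
        exact absurd (conj_neg_one hc h2) (B5_ne_neg_one k)
    · by_cases h3 : (A - 1).det = 0
      · rcases Int.isUnit_iff.mp hA with he | he
        · -- det = 1 : unipotent, case 4
          obtain ⟨k, hconj, hk0⟩ := construct A 1 he h3 h1
          have hkne : k ≠ 0 := fun h => h1 (hk0 rfl h)
          refine ⟨4, ⟨k, hkne, hconj⟩, ?_⟩
          intro j hj
          fin_cases j
          · exact absurd (hj : A = 1) h1
          · exact absurd (hj : A = -1) h2
          · exact absurd h3 (hj : A ≠ -1 ∧ (A - 1).det ≠ 0).2
          · obtain ⟨k', hc⟩ := (hj : ∃ k : ℤ, ConjGL2 A !![1, k; 0, -1])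
            have hd := conj_det hc
            rw [he, B4_det] at hd
            norm_num at hd
          · rfl
        · -- det = -1 : case 3
          obtain ⟨k, hconj, _⟩ := construct A (-1) he h3 h1
          refine ⟨3, ⟨k, hconj⟩, ?_⟩
          intro j hj
          fin_cases j
          · exact absurd (hj : A = 1) h1
          · exact absurd (hj : A = -1) h2
          · exact absurd h3 (hj : A ≠ -1 ∧ (A - 1).det ≠ 0).2
          · rfl
          · obtain ⟨k', hk', hc⟩ := (hj : ∃ k : ℤ, k ≠ 0 ∧ ConjGL2 A !![1, k; 0, 1])
            have hd := conj_det hc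
            rw [he, B5_det] at hd
            norm_num at hd
      · refine ⟨2, ⟨h2, h3⟩, ?_⟩
        intro j hj
        fin_cases j
        · exact absurd (hj : A = 1) h1
        · exact absurd (hj : A = -1) h2
        · rfl
        · obtain ⟨k, hc⟩ := (hj : ∃ k : ℤ, ConjGL2 A !![1, k; 0, -1])
          exact absurd ((conj_sub_one_det hc).trans (B4_sub_det k)) h3
        · obtain ⟨k, hk, hc⟩ := (hj : ∃ k : ℤ, k ≠ 0 ∧ ConjGL2 A !![1, k; 0, 1])
          exact absurd ((conj_sub_one_det hc).trans (B5_sub_det k)) h3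
end

section
/- Let F_n be a free group of rank n and φ ∈ Aut(F_n). The mapping torus M_φ = F_n ⋊_φ ℤ has non-trivial centre if and only if φ^k = γ_w for some integer k ≠ 0 and some w ∈ F_n. Moreover, if n ≥ 2 and φ^k = γ_w for some integer k and w ∈ F_n, then wφ = w. -/
open Multiplicative

/-! ### Auxiliary lemmas -/

open FreeGroup in
lemma toWord_mk_single_mul {α : Type*} [DecidableEq α] (x : α × Bool) (w : FreeGroup α)
    (h : ∀ y ∈ w.toWord.head?, ¬(x.1 = y.1 ∧ x.2 = !y.2)) :
    (FreeGroup.mk [x] * w).toWord = x :: w.toWord := by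
  conv_lhs => rw [← mk_toWord (x := w), mul_mk]
  rw [List.singleton_append, toWord_mk, reduce.cons, reduce_toWord]
  cases hL : w.toWord with
  | nil => simp
  | cons y t =>
    have := h y (by rw [hL]; rfl)
    simp only [this, if_false]

open FreeGroup in
lemma invRev_cons' {α : Type*} (y : α × Bool) (M : List (α × Bool)) :
    invRev (y :: M) = invRev M ++ [(y.1, !y.2)] := by
  simp [invRev]

-- The centre of a free group of rank at least `2` is trivial.
open FreeGroup in
lemma freeGroup_central {n : ℕ} (hn : 2 ≤ n) (w : FreeGroup (Fin n))
    (hc : ∀ x, w * x = x * w) : w = 1 := by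
  by_contra hw
  have hL : w.toWord ≠ [] := fun h => hw (toWord_eq_nil_iff.mp h)
  obtain ⟨p, L', hL'⟩ := List.exists_cons_of_ne_nil hL
  set q := w.toWord.getLast hL with hq
  have hj' : ∃ j : Fin n, j ≠ p.1 := by
    rcases p with ⟨⟨i, hi⟩, b⟩
    by_cases h : i = 0
    · exact ⟨⟨1, by omega⟩, by simp [h, Fin.ext_iff]⟩
    · exact ⟨⟨0, by omega⟩, by simp [Fin.ext_iff]; omega⟩
  obtain ⟨j, hj⟩ := hj'
  set c : Bool := if q.1 = j then q.2 else true with hcdef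
  set g := FreeGroup.mk [(j, c)] with hg
  have h1 : (g * w).toWord = (j, c) :: w.toWord := by
    apply toWord_mk_single_mul
    intro y hy
    rw [hL'] at hy
    simp only [List.head?_cons, Option.mem_def, Option.some.injEq] at hy
    subst hy
    exact fun hh => hj hh.1
  have hginv : g⁻¹ = FreeGroup.mk [(j, !c)] := by
    rw [hg, inv_mk]; congr 1
  have hhead : (w⁻¹).toWord.head? = some (q.1, !q.2) := by
    rw [toWord_inv]
    rw [show invRev w.toWord = (w.toWord.map (fun x => (x.1, !x.2))).reverse from rfl]
    rw [List.head?_reverse]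
    rw [List.getLast?_map]
    rw [List.getLast?_eq_getLast hL]
    rfl
  have h2 : (g⁻¹ * w⁻¹).toWord = (j, !c) :: (w⁻¹).toWord := by
    rw [hginv]
    apply toWord_mk_single_mul
    intro y hy
    rw [hhead] at hy
    simp only [Option.mem_def, Option.some.injEq] at hy
    rw [← hy]
    rintro ⟨h1', h2'⟩
    simp only [Bool.not_not] at h1' h2'
    rw [if_pos h1'.symm] at hcdef
    rw [hcdef] at h2'
    simp at h2'
  have h3 : (w * g).toWord = w.toWord ++ [(j, c)] := by
    have : ((w * g)⁻¹).toWord = (j, !c) :: (w⁻¹).toWord := by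
      rw [mul_inv_rev]; exact h2
    rw [toWord_inv] at this
    have := congrArg invRev this
    rw [invRev_invRev, invRev_cons', ← toWord_inv, inv_inv] at this
    simpa using this
  have heq : w.toWord ++ [(j, c)] = (j, c) :: w.toWord := by
    rw [← h3, ← h1, hc g]
  rw [hL'] at heq
  simp only [List.cons_append, List.cons.injEq] at heq
  exact hj (congrArg Prod.fst heq.1.symm) |>.elim

lemma zpow_fix {G : Type*} [Group G] (f : MulAut G) (w : G) (h : f w = w) (m : ℤ) :
    (f ^ m) w = w := by
  have hinv : f⁻¹ w = w := by
    apply f.injective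
    rw [show (f⁻¹ : MulAut G) w = f.symm w from rfl, MulEquiv.apply_symm_apply, h]
  induction m using Int.induction_on with
  | zero => rfl
  | succ i ih => rw [zpow_add_one, MulAut.mul_apply, h, ih]
  | pred i ih => rw [zpow_sub_one, MulAut.mul_apply, hinv, ih]

/-- If `φ^k` is conjugation by `w⁻¹`, then `φ w * w⁻¹` is central in the free group. -/
lemma conj_pow_central {n : ℕ} (φ : MulAut (FreeGroup (Fin n))) (k : ℤ) (w : FreeGroup (Fin n))
    (hw : φ ^ k = MulAut.conj w⁻¹) :
    ∀ x, (φ w * w⁻¹) * x = x * (φ w * w⁻¹) := by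
  intro x
  obtain ⟨y, rfl⟩ := φ.surjective x
  have hcomm : (φ ^ k) (φ y) = φ ((φ ^ k) y) := by
    have : φ ^ k * φ = φ * φ ^ k := ((Commute.refl φ).zpow_left k)
    calc (φ ^ k) (φ y) = (φ ^ k * φ) y := rfl
      _ = (φ * φ ^ k) y := by rw [this]
      _ = φ ((φ ^ k) y) := rfl
  rw [hw] at hcomm
  rw [show (MulAut.conj w⁻¹ : MulAut _) (φ y) = w⁻¹ * φ y * w⁻¹⁻¹ from rfl,
    show (MulAut.conj w⁻¹ : MulAut _) y = w⁻¹ * y * w⁻¹⁻¹ from rfl, inv_inv,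
    map_mul, map_mul, map_inv] at hcomm
  have h2 : φ w * (w⁻¹ * φ y * w) * w⁻¹ = φ w * ((φ w)⁻¹ * φ y * φ w) * w⁻¹ := by
    rw [hcomm]
  group at h2 ⊢
  exact h2

lemma mulaut_fixes {n : ℕ} (hn : 2 ≤ n) (φ : MulAut (FreeGroup (Fin n))) (k : ℤ)
    (w : FreeGroup (Fin n)) (hw : φ ^ k = MulAut.conj w⁻¹) : φ w = w := by
  have := freeGroup_central hn _ (conj_pow_central φ k w hw)
  rwa [mul_inv_eq_one] at this

lemma freeGroup_one_zpowers (g : FreeGroup (Fin 1)) :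
    g ∈ Subgroup.zpowers (FreeGroup.of (0 : Fin 1)) := by
  induction g using FreeGroup.induction_on with
  | C1 => exact one_mem _
  | of x => rw [Subsingleton.elim x 0]; exact Subgroup.mem_zpowers _
  | inv_of x h => exact inv_mem h
  | mul x y hx hy => exact mul_mem hx hy

lemma freeGroup_zero_eq_one (g : FreeGroup (Fin 0)) : g = 1 := by
  induction g using FreeGroup.induction_on with
  | C1 => rfl
  | of x => exact absurd x.2 (by omega)
  | inv_of x h => rw [h]; simp
  | mul x y hx hy => rw [hx, hy, one_mul]

lemma small_comm {n : ℕ} (hn : n < 2) (a b : FreeGroup (Fin n)) : a * b = b * a := by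
  interval_cases n
  · rw [freeGroup_zero_eq_one a, freeGroup_zero_eq_one b]
  · obtain ⟨i, hi⟩ := freeGroup_one_zpowers a
    obtain ⟨j, hj⟩ := freeGroup_one_zpowers b
    simp only at hi hj
    rw [← hi, ← hj]
    exact zpow_mul_comm _ i j

lemma small_autsq {n : ℕ} (hn : n < 2) (φ : MulAut (FreeGroup (Fin n))) : φ ^ 2 = 1 := by
  interval_cases n
  · ext g
    rw [freeGroup_zero_eq_one (((φ ^ 2)) g)]
    rw [show (1 : MulAut (FreeGroup (Fin 0))) g = g from rfl, freeGroup_zero_eq_one g]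
  · set x := FreeGroup.of (0 : Fin 1) with hx
    obtain ⟨d, hd⟩ := freeGroup_one_zpowers (φ x)
    obtain ⟨e, he⟩ := freeGroup_one_zpowers (φ⁻¹ x)
    simp only at hd he
    rw [← hx] at hd he
    have hxde : x ^ (e * d) = x := by
      calc x ^ (e * d) = (x ^ e) ^ d := by rw [zpow_mul]
        _ = (φ⁻¹ x) ^ d := by rw [he]
        _ = φ⁻¹ (x ^ d) := by rw [map_zpow]
        _ = φ⁻¹ (φ x) := by rw [hd]
        _ = x := by
            rw [show (φ⁻¹ : MulAut _) (φ x) = φ.symm (φ x) from rfl, MulEquiv.symm_apply_apply]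
    have hde : e * d = 1 := by
      set f : FreeGroup (Fin 1) →* Multiplicative ℤ :=
        FreeGroup.lift (fun _ => Multiplicative.ofAdd (1 : ℤ)) with hf
      have := congrArg f hxde
      rw [map_zpow] at this
      have hfx : f x = Multiplicative.ofAdd (1 : ℤ) := FreeGroup.lift_apply_of
      rw [hfx] at this
      have : (e * d) * 1 = 1 := by
        have := congrArg Multiplicative.toAdd this
        simpa using this
      omega
    have hd2 : d * d = 1 := by
      rcases Int.eq_one_or_neg_one_of_mul_eq_one' hde with ⟨_, rfl⟩ | ⟨_, rfl⟩ <;> norm_num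
    have hphix : (φ ^ 2) x = x := by
      have : (φ ^ 2) x = φ (φ x) := by rw [sq]; rfl
      rw [this, ← hd, map_zpow, ← hd, ← zpow_mul, hd2, zpow_one]
    ext g
    obtain ⟨m, hm⟩ := freeGroup_one_zpowers g
    simp only at hm
    rw [← hx] at hm
    rw [← hm, map_zpow, hphix]
    rfl

/-! ### The given definitions -/

/-- The mapping torus `M_φ = F_n ⋊_φ ℤ` of an automorphism `φ` of the free group of rank
`n`, presented by `⟨x₁,…,xₙ,t ∣ t⁻¹ xᵢ t = xᵢ φ⟩`; with the conventions of
`SemidirectProduct`, conjugation `t⁻¹ x t` of an element `x` of the fibre `F_n` by the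
stable letter `t = inr (ofAdd 1)` is exactly `φ x`. -/
abbrev MappingTorus {n : ℕ} (φ : MulAut (FreeGroup (Fin n))) :=
  FreeGroup (Fin n) ⋊[zpowersHom (MulAut (FreeGroup (Fin n))) φ⁻¹] Multiplicative ℤ

/-- The stable letter `t` of the mapping torus. -/
def stab {n : ℕ} (φ : MulAut (FreeGroup (Fin n))) : MappingTorus φ :=
  SemidirectProduct.inr (ofAdd 1)

/-- The free fibre `F_n`, regarded as a (normal) subgroup of the mapping torus. -/
def Fsub {n : ℕ} (φ : MulAut (FreeGroup (Fin n))) : Subgroup (MappingTorus φ) :=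
  (SemidirectProduct.inl : FreeGroup (Fin n) →* MappingTorus φ).range

instance Fsub.normal {n : ℕ} (φ : MulAut (FreeGroup (Fin n))) : (Fsub φ).Normal := by
  unfold Fsub
  rw [SemidirectProduct.range_inl_eq_ker_rightHom]
  infer_instance

/-! ### More auxiliary lemmas about the mapping torus -/

lemma psi_apply {n : ℕ} (φ : MulAut (FreeGroup (Fin n))) (m : Multiplicative ℤ) :
    zpowersHom (MulAut (FreeGroup (Fin n))) φ⁻¹ m = (φ ^ (-(toAdd m)))  := by
  rw [zpowersHom_apply, inv_zpow, zpow_neg]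

lemma center_ne_bot_of_conj {n : ℕ} (φ : MulAut (FreeGroup (Fin n))) (k : ℤ) (hk : k ≠ 0)
    (w : FreeGroup (Fin n)) (hw : φ ^ k = MulAut.conj w⁻¹) (hfix : φ w = w) :
    Subgroup.center (MappingTorus φ) ≠ ⊥ := by
  set z : MappingTorus φ := ⟨w⁻¹, ofAdd k⟩ with hz
  have hzmem : z ∈ Subgroup.center (MappingTorus φ) := by
    rw [Subgroup.mem_center_iff]
    intro g
    ext
    · show g.left * zpowersHom _ φ⁻¹ g.right z.left = z.left * zpowersHom _ φ⁻¹ z.right g.left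
      rw [psi_apply, psi_apply]
      show g.left * (φ ^ (-toAdd g.right)) w⁻¹ = w⁻¹ * (φ ^ (-toAdd (ofAdd k))) g.left
      have e1 : (φ ^ (-toAdd g.right)) w⁻¹ = w⁻¹ := by
        rw [map_inv, zpow_fix φ w hfix]
      have e2 : (φ ^ (-toAdd (ofAdd k))) g.left = w * g.left * w⁻¹ := by
        rw [toAdd_ofAdd, zpow_neg, hw,
          show ((MulAut.conj w⁻¹)⁻¹ : MulAut _) g.left = w⁻¹⁻¹ * g.left * w⁻¹ from rfl, inv_inv]
      rw [e1, e2]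
      group
    · exact mul_comm (G := Multiplicative ℤ) _ _
  intro hbot
  rw [hbot, Subgroup.mem_bot] at hzmem
  have : z.right = 1 := by rw [hzmem]; rfl
  rw [hz] at this
  exact hk (by simpa using congrArg toAdd this)

lemma center_forward {n : ℕ} (hn : 2 ≤ n) (φ : MulAut (FreeGroup (Fin n)))
    (h : Subgroup.center (MappingTorus φ) ≠ ⊥) :
    ∃ k : ℤ, k ≠ 0 ∧ ∃ w : FreeGroup (Fin n), φ ^ k = MulAut.conj w⁻¹ := by
  obtain ⟨z, hzmem, hz1⟩ : ∃ z ∈ Subgroup.center (MappingTorus φ), z ≠ 1 := by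
    by_contra hcon
    push_neg at hcon
    exact h ((Subgroup.eq_bot_iff_forall _).mpr hcon)
  rw [Subgroup.mem_center_iff] at hzmem
  have key : ∀ b : FreeGroup (Fin n),
      b * z.left = z.left * (φ ^ (-toAdd z.right)) b := by
    intro b
    have := hzmem (SemidirectProduct.inl b)
    have hleft := congrArg SemidirectProduct.left this
    simp only [SemidirectProduct.mul_left, SemidirectProduct.left_inl,
      SemidirectProduct.right_inl, map_one, MulAut.one_apply] at hleft
    rw [psi_apply] at hleft
    exact hleft
  by_cases hr : toAdd z.right = 0
  · -- z lies in the fibre, hence is central in the free group, hence trivial: contradiction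
    have hz1' : z.right = 1 := by
      have := congrArg ofAdd hr; simpa using this
    have hcentral : ∀ b, z.left * b = b * z.left := by
      intro b
      have := key b
      rw [hr, neg_zero, zpow_zero, MulAut.one_apply] at this
      exact this.symm
    have : z.left = 1 := freeGroup_central hn _ hcentral
    exact absurd (SemidirectProduct.ext this hz1') hz1
  · refine ⟨-toAdd z.right, by omega, z.left, ?_⟩
    ext b
    have hb := key b
    have h4 : (φ ^ (-toAdd z.right)) b = z.left⁻¹ * b * z.left := by
      rw [mul_assoc, hb, inv_mul_cancel_left]
    rw [show (MulAut.conj z.left⁻¹ : MulAut _) b = z.left⁻¹ * b * z.left⁻¹⁻¹ from rfl, inv_inv]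
    exact h4

/-! ### The main theorem -/

/-- `M_φ` has non-trivial centre iff `φ^k = γ_w` (conjugation `x ↦ w⁻¹ x w`) for some
`k ≠ 0` and `w ∈ F_n`; moreover if `n ≥ 2` and `φ^k = γ_w` then `w φ = w`. -/
theorem stmt8 (n : ℕ) (φ : MulAut (FreeGroup (Fin n))) :
    (Subgroup.center (MappingTorus φ) ≠ ⊥ ↔
      ∃ k : ℤ, k ≠ 0 ∧ ∃ w : FreeGroup (Fin n), φ ^ k = MulAut.conj w⁻¹) ∧
    (2 ≤ n → ∀ (k : ℤ) (w : FreeGroup (Fin n)), φ ^ k = MulAut.conj w⁻¹ → φ w = w) := by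
  rcases le_or_gt 2 n with hn | hn
  · refine ⟨⟨center_forward hn φ, ?_⟩, fun _ => mulaut_fixes hn φ⟩
    rintro ⟨k, hk, w, hw⟩
    exact center_ne_bot_of_conj φ k hk w hw (mulaut_fixes hn φ k w hw)
  · have hsq : φ ^ (2 : ℤ) = 1 := by
      have := small_autsq hn φ
      rw [show (2 : ℤ) = ((2 : ℕ) : ℤ) by norm_num, zpow_natCast, this]
    constructor
    · constructor
      · intro _
        refine ⟨2, two_ne_zero, 1, ?_⟩
        rw [hsq, inv_one]
        ext b
        rw [show (MulAut.conj (1 : FreeGroup (Fin n)) : MulAut _) b = 1 * b * 1⁻¹ from rfl]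
        simp
      · intro _ hbot
        set z : MappingTorus φ := SemidirectProduct.inr (ofAdd 2) with hz
        have hzmem : z ∈ Subgroup.center (MappingTorus φ) := by
          rw [Subgroup.mem_center_iff]
          intro g
          ext
          · show g.left * zpowersHom _ φ⁻¹ g.right z.left
              = z.left * zpowersHom _ φ⁻¹ z.right g.left
            rw [show z.left = 1 from rfl, show z.right = ofAdd 2 from rfl]
            rw [map_one, psi_apply, toAdd_ofAdd]
            rw [show φ ^ (-(2:ℤ)) = (φ ^ (2:ℤ))⁻¹ by rw [zpow_neg], hsq, inv_one]
            simp
          · exact mul_comm (G := Multiplicative ℤ) _ _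
        rw [hbot, Subgroup.mem_bot] at hzmem
        have : z.right = 1 := by rw [hzmem]; rfl
        rw [hz] at this
        simpa using congrArg toAdd this
    · intro h2n; omega
end

section
/- Let F_n be a free group of rank n, φ ∈ Aut(F_n), and M_φ = F_n ⋊_φ ℤ. The matrix φ^ab induced by φ on the abelianization ℤⁿ of F_n does not have 1 as an eigenvalue (i.e., there is no nonzero u ∈ ℤⁿ with u·φ^ab = u) if and only if F_n is the unique normal subgroup of M_φ whose quotient group is isomorphic to ℤ. -/
open Multiplicative

/-- The total exponent sum of the generator `x_j` in a word of the free group. -/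
def expSum {n : ℕ} (j : Fin n) : FreeGroup (Fin n) →* Multiplicative ℤ :=
  FreeGroup.lift fun i => ofAdd (if i = j then (1 : ℤ) else 0)

/-- The matrix `φ^ab` induced by an automorphism `φ` of `F_n` on the abelianisation
`ℤⁿ`, written in row form: the `(i,j)` entry is the exponent sum of `x_j` in `φ xᵢ`. -/
def abMatrix {n : ℕ} (φ : MulAut (FreeGroup (Fin n))) : Matrix (Fin n) (Fin n) ℤ :=
  Matrix.of fun i j => toAdd (expSum j (φ (FreeGroup.of i)))

lemma expSum_of {n : ℕ} (j i : Fin n) :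
    expSum j (FreeGroup.of i) = ofAdd (if i = j then (1:ℤ) else 0) :=
  FreeGroup.lift_apply_of

lemma hom_expand {n : ℕ} (ψ : FreeGroup (Fin n) →* Multiplicative ℤ) (w : FreeGroup (Fin n)) :
    ψ w = ∏ j, ψ (FreeGroup.of j) ^ (expSum j w).toAdd := by
  have h : ψ = ∏ j, (zpowersHom (Multiplicative ℤ) (ψ (FreeGroup.of j))).comp (expSum j) := by
    apply FreeGroup.ext_hom
    intro a
    rw [MonoidHom.finset_prod_apply]
    simp only [MonoidHom.comp_apply, expSum_of, zpowersHom_apply, toAdd_ofAdd]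
    symm
    calc (∏ j, ψ (FreeGroup.of j) ^ (if a = j then (1:ℤ) else 0))
        = ∏ j, (if a = j then ψ (FreeGroup.of j) else 1) :=
          Finset.prod_congr rfl (fun j _ => by split_ifs with hj <;> simp [hj])
      _ = ψ (FreeGroup.of a) := by rw [Finset.prod_ite_eq]; simp
  conv_lhs => rw [h]
  rw [MonoidHom.finset_prod_apply]
  rfl

lemma fix_row_iff_det {n : ℕ} (A : Matrix (Fin n) (Fin n) ℤ) :
    (∀ u : Fin n → ℤ, Matrix.vecMul u A = u → u = 0) ↔ (A - 1).det ≠ 0 := by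
  rw [ne_eq, ← Matrix.exists_vecMul_eq_zero_iff]
  push_neg
  constructor
  · intro h u hu h0
    refine hu (h u ?_)
    rwa [Matrix.vecMul_sub, Matrix.vecMul_one, sub_eq_zero] at h0
  · intro h u hu
    by_contra h0
    exact h u h0 (by rw [Matrix.vecMul_sub, Matrix.vecMul_one, sub_eq_zero]; exact hu)

lemma fix_col_iff_det {n : ℕ} (A : Matrix (Fin n) (Fin n) ℤ) :
    (∀ v : Fin n → ℤ, A.mulVec v = v → v = 0) ↔ (A - 1).det ≠ 0 := by
  rw [ne_eq, ← Matrix.exists_mulVec_eq_zero_iff]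
  push_neg
  constructor
  · intro h u hu h0
    refine hu (h u ?_)
    rwa [Matrix.sub_mulVec, Matrix.one_mulVec, sub_eq_zero] at h0
  · intro h u hu
    by_contra h0
    exact h u h0 (by rw [Matrix.sub_mulVec, Matrix.one_mulVec, sub_eq_zero]; exact hu)

open SemidirectProduct in
/-- `inl (φ x) = t⁻¹ * inl x * t` in the mapping torus: for any hom to a commutative
group, `f (inl (φ x)) = f (inl x)`. -/
lemma map_inl_aut {n : ℕ} (φ : MulAut (FreeGroup (Fin n)))
    (f : MappingTorus φ →* Multiplicative ℤ) (x : FreeGroup (Fin n)) :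
    f (inl (φ x)) = f (inl x) := by
  have h1 : (zpowersHom (MulAut (FreeGroup (Fin n))) φ⁻¹) (ofAdd (-1)) = φ := by
    rw [zpowersHom_apply]
    simp
  have h2 : (inl (φ x) : MappingTorus φ) =
      inr (ofAdd (-1)) * inl x * inr (ofAdd (-1))⁻¹ := by
    rw [← h1]; exact inl_aut _ _
  simp only [h2, map_mul, map_inv, mul_inv_cancel_comm]

open SemidirectProduct in
/-- For a hom from the free group fixed by `φ` on generators, values encode a fixed
vector of `abMatrix φ`. -/
lemma hom_fixed_vec {n : ℕ} (φ : MulAut (FreeGroup (Fin n)))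
    (ψ : FreeGroup (Fin n) →* Multiplicative ℤ)
    (hψ : ∀ x, ψ (φ x) = ψ x) :
    (abMatrix φ).mulVec (fun j => (ψ (FreeGroup.of j)).toAdd) =
      fun j => (ψ (FreeGroup.of j)).toAdd := by
  funext i
  have := hom_expand ψ (φ (FreeGroup.of i))
  rw [hψ] at this
  have h2 : (ψ (FreeGroup.of i)).toAdd
      = (∏ j, ψ (FreeGroup.of j) ^ (expSum j (φ (FreeGroup.of i))).toAdd).toAdd := by
    rw [← this]
  rw [toAdd_prod] at h2
  simp only [toAdd_zpow, smul_eq_mul] at h2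
  rw [Matrix.mulVec]
  symm
  rw [h2]
  rfl

lemma Fsub_eq {n : ℕ} (φ : MulAut (FreeGroup (Fin n))) :
    Fsub φ = (SemidirectProduct.rightHom :
      MappingTorus φ →* Multiplicative ℤ).ker :=
  SemidirectProduct.range_inl_eq_ker_rightHom


/-- `φ^ab` does not have `1` as an eigenvalue iff the fibre `F_n` is the unique normal
subgroup of `M_φ` whose quotient group is isomorphic to `ℤ`. -/
theorem stmt12 (n : ℕ) (φ : MulAut (FreeGroup (Fin n))) :
    (∀ u : Fin n → ℤ, Matrix.vecMul u (abMatrix φ) = u → u = 0) ↔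
    (Nonempty ((MappingTorus φ ⧸ Fsub φ) ≃* Multiplicative ℤ) ∧
      ∀ (N : Subgroup (MappingTorus φ)) [N.Normal],
        Nonempty ((MappingTorus φ ⧸ N) ≃* Multiplicative ℤ) → N = Fsub φ) := by
  rw [fix_row_iff_det]
  constructor
  · intro hdet
    refine ⟨⟨(QuotientGroup.quotientMulEquivOfEq (Fsub_eq φ)).trans
      (QuotientGroup.quotientKerEquivOfSurjective _
        SemidirectProduct.rightHom_surjective)⟩, ?_⟩
    intro N hN hNe
    obtain ⟨e⟩ := hNe
    set f : MappingTorus φ →* Multiplicative ℤ :=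
      e.toMonoidHom.comp (QuotientGroup.mk' N) with hf
    have hker : f.ker = N := by
      ext x
      simp [f, MonoidHom.mem_ker, QuotientGroup.eq_one_iff]
    have hsurj : Function.Surjective f := by
      intro y
      obtain ⟨q, hq⟩ := e.surjective y
      obtain ⟨x, hx⟩ := QuotientGroup.mk'_surjective N q
      refine ⟨x, ?_⟩
      have hx' : ((x : MappingTorus φ) : MappingTorus φ ⧸ N) = q := hx
      simp [f, hx', hq]
    set ψ := f.comp SemidirectProduct.inl with hψdef
    have hfix := hom_fixed_vec φ ψ (fun x => map_inl_aut φ f x)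
    have ha : (fun j => (ψ (FreeGroup.of j)).toAdd) = (0 : Fin n → ℤ) :=
      (fix_col_iff_det (abMatrix φ)).mpr hdet _ hfix
    have hψ1 : ∀ x, ψ x = 1 := by
      have h1 : ψ = 1 := FreeGroup.ext_hom _ _ (fun i => by
        have h2 := congrFun ha i
        simp only [Pi.zero_apply] at h2
        simpa using Multiplicative.toAdd.injective (a₁ := ψ (FreeGroup.of i)) (a₂ := 1)
          (by simpa using h2))
      intro x; rw [h1]; rfl
    have hfact : ∀ x : MappingTorus φ, f x = f (SemidirectProduct.inr x.right) := by
      intro x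
      conv_lhs => rw [← SemidirectProduct.inl_left_mul_inr_right x]
      rw [map_mul, show f (SemidirectProduct.inl x.left) = 1 from hψ1 x.left, one_mul]
    set g := f.comp SemidirectProduct.inr with hg
    have hgm : ∀ m : ℤ, g (ofAdd m) = ofAdd (m * (g (ofAdd 1)).toAdd) := by
      intro m
      have h1 : (ofAdd (1:ℤ)) ^ m = ofAdd m := by
        apply Multiplicative.toAdd.injective
        simp [toAdd_zpow]
      rw [← h1, map_zpow]
      apply Multiplicative.toAdd.injective
      simp [toAdd_zpow, mul_comm]
    have hgsurj : Function.Surjective g := by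
      intro y
      obtain ⟨x, hx⟩ := hsurj y
      exact ⟨x.right, by rw [show g x.right = f (SemidirectProduct.inr x.right) from rfl,
        ← hfact, hx]⟩
    have hk0 : (g (ofAdd 1)).toAdd ≠ 0 := by
      obtain ⟨y, hy⟩ := hgsurj (ofAdd 1)
      have h1 := hgm (toAdd y)
      rw [ofAdd_toAdd, hy] at h1
      have h2 : toAdd y * (g (ofAdd 1)).toAdd = 1 :=
        Multiplicative.ofAdd.injective h1.symm
      intro h0
      rw [h0, mul_zero] at h2
      exact one_ne_zero h2.symm
    rw [← hker, Fsub_eq]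
    ext x
    rw [MonoidHom.mem_ker, MonoidHom.mem_ker]
    have h1 : f x = ofAdd ((toAdd x.right) * (g (ofAdd 1)).toAdd) := by
      rw [hfact x, show f (SemidirectProduct.inr x.right) = g x.right from rfl,
        ← ofAdd_toAdd x.right, hgm]
      simp
    rw [h1, SemidirectProduct.rightHom_eq_right]
    constructor
    · intro h2
      have h3 : (toAdd x.right) * (g (ofAdd 1)).toAdd = 0 :=
        Multiplicative.ofAdd.injective (h2.trans ofAdd_zero.symm)
      have h4 : toAdd x.right = 0 := by
        rcases mul_eq_zero.mp h3 with h | h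
        · exact h
        · exact absurd h hk0
      exact Multiplicative.toAdd.injective (by simpa using h4)
    · intro h2
      show ofAdd _ = 1
      rw [show x.right = 1 from h2]
      simp
  · rintro ⟨-, huniq⟩
    by_contra hdet0
    obtain ⟨v, hv0, hv⟩ := Matrix.exists_mulVec_eq_zero_iff.mpr hdet0
    have hfix : (abMatrix φ).mulVec v = v := by
      rwa [Matrix.sub_mulVec, Matrix.one_mulVec, sub_eq_zero] at hv
    set f₁ : FreeGroup (Fin n) →* Multiplicative ℤ :=
      FreeGroup.lift (fun i => ofAdd (v i)) with hf₁
    have hgen : ∀ i, f₁ (FreeGroup.of i) = ofAdd (v i) := fun i => FreeGroup.lift_apply_of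
    have hφ1 : ∀ x, f₁ (φ x) = f₁ x := by
      have h1 : f₁.comp φ.toMonoidHom = f₁ := by
        apply FreeGroup.ext_hom
        intro i
        simp only [MonoidHom.comp_apply, MulEquiv.coe_toMonoidHom]
        apply Multiplicative.toAdd.injective
        rw [hom_expand f₁ (φ (FreeGroup.of i)), toAdd_prod]
        simp only [toAdd_zpow, hgen, toAdd_ofAdd, smul_eq_mul]
        have h2 := congrFun hfix i
        rw [Matrix.mulVec, dotProduct] at h2
        exact h2
      intro x
      exact DFunLike.congr_fun h1 x
    have hφinv : ∀ x, f₁ (φ⁻¹ x) = f₁ x := by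
      intro x
      have h := hφ1 (φ⁻¹ x)
      rw [MulAut.apply_inv_self] at h
      exact h.symm
    have hpow : ∀ (m : ℤ) (x : FreeGroup (Fin n)), f₁ ((φ⁻¹ ^ m) x) = f₁ x := by
      intro m
      induction m using Int.induction_on with
      | zero => intro x; simp
      | succ m ih =>
        intro x
        rw [show ((φ⁻¹ ^ ((m : ℤ) + 1)) x) = (φ⁻¹ ^ (m : ℤ)) (φ⁻¹ x) from by
          rw [zpow_add_one, MulAut.mul_apply], ih, hφinv]
      | pred m ih =>
        intro x
        rw [show ((φ⁻¹ ^ ((-m : ℤ) - 1)) x) = (φ⁻¹ ^ (-m : ℤ)) (φ x) from by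
          rw [zpow_sub_one, MulAut.mul_apply, inv_inv], ih, hφ1]
    have hcompat : ∀ g : Multiplicative ℤ,
        f₁.comp ((zpowersHom (MulAut (FreeGroup (Fin n))) φ⁻¹) g).toMonoidHom
          = (MulAut.conj ((MonoidHom.id (Multiplicative ℤ)) g)).toMonoidHom.comp f₁ := by
      intro g
      ext x
      simp only [MonoidHom.comp_apply, MulEquiv.coe_toMonoidHom, zpowersHom_apply,
        MonoidHom.id_apply, MulAut.conj_apply, mul_inv_cancel_comm]
      exact hpow _ (FreeGroup.of x)
    set F := SemidirectProduct.lift f₁ (MonoidHom.id (Multiplicative ℤ)) hcompat with hF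
    have hFsurj : Function.Surjective F := fun y =>
      ⟨SemidirectProduct.inr y, by simp [F]⟩
    have heq := huniq F.ker ⟨QuotientGroup.quotientKerEquivOfSurjective F hFsurj⟩
    obtain ⟨i, hi⟩ := Function.ne_iff.mp hv0
    have hmem : SemidirectProduct.inl (FreeGroup.of i) ∈ Fsub φ := ⟨FreeGroup.of i, rfl⟩
    rw [← heq] at hmem
    have h1 : F (SemidirectProduct.inl (FreeGroup.of i)) = 1 := hmem
    rw [SemidirectProduct.lift_inl, hgen] at h1
    exact hi (Multiplicative.ofAdd.injective (h1.trans ofAdd_zero.symm))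
end

section
/- In GL₂(ℤ): (a) the centre of GL₂(ℤ) consists precisely of the matrices I₂ and −I₂; (b) for every non-central element A ∈ GL₂(ℤ), the cyclic subgroup ⟨A⟩ generated by A has finite index in the centraliser of A in GL₂(ℤ). -/
open Multiplicative

namespace Stmt17

abbrev M2 := Matrix (Fin 2) (Fin 2) ℤ
abbrev GL2 := Matrix.GeneralLinearGroup (Fin 2) ℤ



lemma mul_entry (M N : M2) (i j : Fin 2) : (M * N) i j = M i 0 * N 0 j + M i 1 * N 1 j := by
  simp [Matrix.mul_apply, Fin.sum_univ_two]

lemma det_pm (A : GL2) : (A : M2).det = 1 ∨ (A : M2).det = -1 := by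
  have h : IsUnit ((A : M2).det) := by
    rw [← Matrix.GeneralLinearGroup.val_det_apply]
    exact (Matrix.GeneralLinearGroup.det A).isUnit
  exact Int.isUnit_iff.mp h

lemma det_eq (A : GL2) : (A : M2).det = (A:M2) 0 0 * (A:M2) 1 1 - (A:M2) 0 1 * (A:M2) 1 0 :=
  Matrix.det_fin_two _

lemma scalar_eq (A : GL2) (h01 : (A : M2) 0 1 = 0) (h10 : (A : M2) 1 0 = 0)
    (hd : (A : M2) 0 0 = (A : M2) 1 1) : A = 1 ∨ A = -1 := by
  have hdet := det_pm A
  rw [det_eq A, h01, ← hd] at hdet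
  have ha : (A:M2) 0 0 = 1 ∨ (A:M2) 0 0 = -1 := by
    rcases hdet with h | h
    · exact mul_self_eq_one_iff.mp (by linarith)
    · exfalso; nlinarith [sq_nonneg ((A:M2) 0 0)]
  rcases ha with h | h
  · left
    ext i j
    fin_cases i <;> fin_cases j <;>
      simp [Matrix.one_apply, h01, h10, h, ← hd]
  · right
    ext i j
    fin_cases i <;> fin_cases j <;>
      simp [Matrix.one_apply, h01, h10, h, ← hd]

def mkGL (M N : M2) (h1 : M * N = 1) (h2 : N * M = 1) : GL2 := ⟨M, N, h1, h2⟩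

def U1 : GL2 := mkGL !![1,1;0,1] !![1,-1;0,1] (by decide) (by decide)
def U2 : GL2 := mkGL !![1,0;1,1] !![1,0;-1,1] (by decide) (by decide)

lemma part_a (A : GL2) :
    A ∈ Subgroup.center GL2 ↔ A = 1 ∨ A = -1 := by
  constructor
  · intro h
    rw [Subgroup.mem_center_iff] at h
    have h1 : (U1 : M2) * (A : M2) = (A : M2) * (U1 : M2) := by
      have := h U1; exact_mod_cast congrArg Units.val this
    have h2 : (U2 : M2) * (A : M2) = (A : M2) * (U2 : M2) := by
      have := h U2; exact_mod_cast congrArg Units.val this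
    have e1 := fun i j => congrFun (congrFun h1 i) j
    have e2 := fun i j => congrFun (congrFun h2 i) j
    simp only [mul_entry, U1, U2, mkGL] at e1 e2
    have k1 := e1 0 0
    have k2 := e1 0 1
    have k3 := e2 0 0
    have k4 := e2 1 0
    simp at k1 k2 k3 k4
    exact scalar_eq A (by omega) (by omega) (by omega)
  · rintro (rfl | rfl)
    · exact Subgroup.one_mem _
    · rw [Subgroup.mem_center_iff]; intro g; simp

lemma comm_entries {A B : GL2} (hB : B ∈ Subgroup.centralizer {A}) :
    (A:M2) * (B:M2) = (B:M2) * (A:M2) := by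
  have h := Subgroup.mem_centralizer_iff.mp hB A rfl
  exact_mod_cast congrArg Units.val h

lemma exists_coords (A : GL2)
    (hns : ¬((A:M2) 0 1 = 0 ∧ (A:M2) 1 0 = 0 ∧ (A:M2) 0 0 = (A:M2) 1 1)) :
    ∃ D : ℤ, D ≠ 0 ∧ ∃ Y : GL2 → ℤ × ℤ,
      ∀ B ∈ Subgroup.centralizer {A},
        D • (B:M2) = (Y B).1 • (1:M2) + (Y B).2 • (A:M2) := by
  by_cases hb : (A:M2) 0 1 ≠ 0
  · refine ⟨(A:M2) 0 1, hb, fun B => ((A:M2) 0 1 * (B:M2) 0 0 - (B:M2) 0 1 * (A:M2) 0 0, (B:M2) 0 1), ?_⟩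
    intro B hB
    have q := fun i j => congrFun (congrFun (comm_entries hB) i) j
    simp only [mul_entry] at q
    ext i j
    fin_cases i <;> fin_cases j
    all_goals simp only [Matrix.add_apply, Matrix.smul_apply, smul_eq_mul,
      Matrix.one_apply, Fin.mk_zero, Fin.mk_one]
    all_goals norm_num
    all_goals first
      | ring1
      | linear_combination q 0 0
      | linear_combination q 0 1
      | linear_combination q 1 0
      | linear_combination q 1 1
      | linear_combination -(q 0 0)
      | linear_combination -(q 0 1)
      | linear_combination -(q 1 0)
      | linear_combination -(q 1 1)
  · by_cases hc : (A:M2) 1 0 ≠ 0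
    · refine ⟨(A:M2) 1 0, hc, fun B => ((A:M2) 1 0 * (B:M2) 0 0 - (B:M2) 1 0 * (A:M2) 0 0, (B:M2) 1 0), ?_⟩
      intro B hB
      have q := fun i j => congrFun (congrFun (comm_entries hB) i) j
      simp only [mul_entry] at q
      ext i j
      fin_cases i <;> fin_cases j
      all_goals simp only [Matrix.add_apply, Matrix.smul_apply, smul_eq_mul,
        Matrix.one_apply, Fin.mk_zero, Fin.mk_one]
      all_goals norm_num
      all_goals first
        | ring1
        | linear_combination q 0 0
        | linear_combination q 0 1
        | linear_combination q 1 0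
        | linear_combination q 1 1
        | linear_combination -(q 0 0)
        | linear_combination -(q 0 1)
        | linear_combination -(q 1 0)
        | linear_combination -(q 1 1)
    · have hr : (A:M2) 0 0 - (A:M2) 1 1 ≠ 0 := by
        push_neg at hb hc; intro h; exact hns ⟨hb, hc, by omega⟩
      refine ⟨(A:M2) 0 0 - (A:M2) 1 1, hr,
        fun B => (((A:M2) 0 0 - (A:M2) 1 1) * (B:M2) 0 0 - ((B:M2) 0 0 - (B:M2) 1 1) * (A:M2) 0 0,
          (B:M2) 0 0 - (B:M2) 1 1), ?_⟩
      intro B hB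
      have q := fun i j => congrFun (congrFun (comm_entries hB) i) j
      simp only [mul_entry] at q
      ext i j
      fin_cases i <;> fin_cases j
      all_goals simp only [Matrix.add_apply, Matrix.smul_apply, smul_eq_mul,
        Matrix.one_apply, Fin.mk_zero, Fin.mk_one]
      all_goals norm_num
      all_goals first
        | ring1
        | linear_combination q 0 0
        | linear_combination q 0 1
        | linear_combination q 1 0
        | linear_combination q 1 1
        | linear_combination -(q 0 0)
        | linear_combination -(q 0 1)
        | linear_combination -(q 1 0)
        | linear_combination -(q 1 1)
lemma cayley (A : GL2) : (A:M2) * (A:M2)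
    = ((A:M2) 0 0 + (A:M2) 1 1) • (A:M2) - (A:M2).det • (1:M2) := by
  ext i j
  rw [Matrix.det_fin_two]
  fin_cases i <;> fin_cases j <;>
    simp only [mul_entry, Matrix.sub_apply, Matrix.smul_apply, smul_eq_mul,
      Matrix.one_apply, Fin.mk_zero, Fin.mk_one] <;> norm_num <;> ring

lemma unique_coords (A : GL2)
    (hns : ¬((A:M2) 0 1 = 0 ∧ (A:M2) 1 0 = 0 ∧ (A:M2) 0 0 = (A:M2) 1 1))
    {x y x' y' : ℤ}
    (h : x • (1:M2) + y • (A:M2) = x' • (1:M2) + y' • (A:M2)) : x = x' ∧ y = y' := by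
  have q := fun i j => congrFun (congrFun h i) j
  simp only [Matrix.add_apply, Matrix.smul_apply, smul_eq_mul, Matrix.one_apply] at q
  have q00 := q 0 0
  have q01 := q 0 1
  have q10 := q 1 0
  have q11 := q 1 1
  norm_num at q00 q01 q10 q11
  rcases eq_or_ne y y' with rfl | hyy
  · exact ⟨by linarith, rfl⟩
  · exfalso
    apply hns
    have hsub : y - y' ≠ 0 := sub_ne_zero_of_ne hyy
    refine ⟨?_, ?_, ?_⟩
    · rcases q01 with h | h
      · exact absurd h hyy
      · exact h
    · rcases q10 with h | h
      · exact absurd h hyy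
      · exact h
    · rcases mul_eq_zero.mp (show (y - y') * ((A:M2) 0 0 - (A:M2) 1 1) = 0 by
        linear_combination q00 - q11) with h | h
      · exact absurd h hsub
      · omega

lemma box_fin {α : Type*} (Y : α → ℤ × ℤ) (hinj : Function.Injective Y) (K : ℝ)
    (S : Set α) (hS : ∀ a ∈ S, |((Y a).1 : ℝ)| ≤ K ∧ |((Y a).2 : ℝ)| ≤ K) : S.Finite := by
  have hbox : (Set.Icc ((-⌈K⌉, -⌈K⌉) : ℤ × ℤ) (⌈K⌉, ⌈K⌉)).Finite := Set.finite_Icc _ _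
  refine Set.Finite.subset (Set.Finite.preimage hinj.injOn hbox) ?_
  intro a ha
  obtain ⟨h1, h2⟩ := hS a ha
  rw [abs_le] at h1 h2
  have c1 : (Y a).1 ≤ ⌈K⌉ := by exact_mod_cast h1.2.trans (Int.le_ceil K)
  have c2 : (Y a).2 ≤ ⌈K⌉ := by exact_mod_cast h2.2.trans (Int.le_ceil K)
  have c3 : -⌈K⌉ ≤ (Y a).1 := by
    have : ((-⌈K⌉ : ℤ) : ℝ) ≤ ((Y a).1 : ℝ) := by
      push_cast
      linarith [Int.le_ceil K]
    exact_mod_cast this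
  have c4 : -⌈K⌉ ≤ (Y a).2 := by
    have : ((-⌈K⌉ : ℤ) : ℝ) ≤ ((Y a).2 : ℝ) := by
      push_cast
      linarith [Int.le_ceil K]
    exact_mod_cast this
  simp only [Set.mem_preimage, Set.mem_Icc, Prod.le_def]
  exact ⟨⟨c3, c4⟩, ⟨c1, c2⟩⟩

lemma finish_fin {G : Type*} [Group G] (A : G) (H : Subgroup G) (hfin : Finite H) :
    ((Subgroup.zpowers A).subgroupOf H).FiniteIndex := by
  haveI := hfin
  haveI : Finite (H ⧸ (Subgroup.zpowers A).subgroupOf H) := Quotient.finite _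
  exact Subgroup.finiteIndex_of_finite_quotient

lemma finish_hom {G : Type*} [Group G] (A : G) (H : Subgroup G) (hA : A ∈ H)
    (f : H → ℝ) (hf : ∀ B B' : H, f (B * B') = f B + f B')
    (hA0 : f ⟨A, hA⟩ ≠ 0)
    (hfin : ∀ M : ℝ, {B : H | |f B| ≤ M}.Finite) :
    ((Subgroup.zpowers A).subgroupOf H).FiniteIndex := by
  set A' : H := (⟨A, hA⟩ : H) with hA'
  set N := (Subgroup.zpowers A).subgroupOf H with hN
  let F : H →* Multiplicative ℝ := MonoidHom.mk' (fun B => Multiplicative.ofAdd (f B))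
    (fun B B' => by simp [hf B B'])
  have hzpow : ∀ k : ℤ, f (A' ^ k) = k * f A' := by
    intro k
    have h1 : F (A' ^ k) = (F A') ^ k := map_zpow F A' k
    have := congrArg Multiplicative.toAdd h1
    simpa [F, toAdd_zpow] using this
  haveI : Finite (H ⧸ N) := by
    haveI := (hfin |f A'|).to_subtype
    refine Finite.of_surjective
      (fun B : {B : H | |f B| ≤ |f A'|} => (QuotientGroup.mk (B : H) : H ⧸ N)) ?_
    intro q
    induction q using QuotientGroup.induction_on with
    | H B =>
      set t := f A' with ht
      set k := ⌊f B / t⌋ with hk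
      have hmem : A' ^ (-k) ∈ N := by
        rw [hN, Subgroup.mem_subgroupOf]
        have : ((A' ^ (-k) : H) : G) = A ^ (-k) := by
          push_cast [hA']
          rfl
        rw [this]
        exact zpow_mem (Subgroup.mem_zpowers A) _
      have hb : |f (B * A' ^ (-k))| ≤ |t| := by
        have h1 : f (B * A' ^ (-k)) = f B - k * t := by
          rw [hf, hzpow]; push_cast; ring
        rw [h1]
        have h2 : f B = (f B / t) * t := by field_simp
        have h3 : |f B / t - k| ≤ 1 := by
          rw [abs_le]
          constructor
          · linarith [Int.floor_le (f B / t)]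
          · linarith [Int.lt_floor_add_one (f B / t)]
        calc |f B - k * t| = |(f B / t - k) * t| := by rw [sub_mul, ← h2]
          _ = |f B / t - k| * |t| := abs_mul _ _
          _ ≤ 1 * |t| := by gcongr
          _ = |t| := one_mul _
      refine ⟨⟨B * A' ^ (-k), hb⟩, ?_⟩
      simp only
      rw [QuotientGroup.mk_mul_of_mem _ hmem]
  exact Subgroup.finiteIndex_of_finite_quotient

section Laws

variable {A : GL2} {D : ℤ} {Y : GL2 → ℤ × ℤ}

lemma prod_law
    (hns : ¬((A:M2) 0 1 = 0 ∧ (A:M2) 1 0 = 0 ∧ (A:M2) 0 0 = (A:M2) 1 1))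
    (hY : ∀ B ∈ Subgroup.centralizer {A},
      D • (B:M2) = (Y B).1 • (1:M2) + (Y B).2 • (A:M2))
    {B B' : GL2} (hB : B ∈ Subgroup.centralizer {A}) (hB' : B' ∈ Subgroup.centralizer {A}) :
    D * (Y (B * B')).1 = (Y B).1 * (Y B').1 - (A:M2).det * ((Y B).2 * (Y B').2) ∧
    D * (Y (B * B')).2 = (Y B).1 * (Y B').2 + (Y B').1 * (Y B).2
      + ((A:M2) 0 0 + (A:M2) 1 1) * ((Y B).2 * (Y B').2) := by
  have hBB' : B * B' ∈ Subgroup.centralizer {A} := mul_mem hB hB'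
  have e := hY (B * B') hBB'
  rw [Units.val_mul] at e
  have key : (D * (Y (B * B')).1) • (1:M2) + (D * (Y (B * B')).2) • (A:M2)
      = ((Y B).1 * (Y B').1 - (A:M2).det * ((Y B).2 * (Y B').2)) • (1:M2)
        + ((Y B).1 * (Y B').2 + (Y B').1 * (Y B).2
            + ((A:M2) 0 0 + (A:M2) 1 1) * ((Y B).2 * (Y B').2)) • (A:M2) := by
    have lhs : (D * D) • ((B:M2) * (B':M2))
        = (D * (Y (B * B')).1) • (1:M2) + (D * (Y (B * B')).2) • (A:M2) := by
      rw [← smul_smul, e, smul_add, smul_smul, smul_smul]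
    rw [← lhs]
    have h2 : (D * D) • ((B:M2) * (B':M2)) = (D • (B:M2)) * (D • (B':M2)) := by
      rw [smul_mul_assoc, mul_smul_comm, smul_smul]
    rw [h2, hY B hB, hY B' hB']
    have expand : ((Y B).1 • (1:M2) + (Y B).2 • (A:M2)) * ((Y B').1 • (1:M2) + (Y B').2 • (A:M2))
        = ((Y B).1 * (Y B').1) • (1:M2) + ((Y B).1 * (Y B').2 + (Y B').1 * (Y B).2) • (A:M2)
          + ((Y B).2 * (Y B').2) • ((A:M2) * (A:M2)) := by
      simp only [add_mul, mul_add, smul_mul_assoc, mul_smul_comm, smul_smul, one_mul, mul_one]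
      module
    rw [expand, cayley A]
    module
  exact unique_coords A hns key

lemma norm_law
    (hY : ∀ B ∈ Subgroup.centralizer {A},
      D • (B:M2) = (Y B).1 • (1:M2) + (Y B).2 • (A:M2))
    {B : GL2} (hB : B ∈ Subgroup.centralizer {A}) :
    (Y B).1 ^ 2 + ((A:M2) 0 0 + (A:M2) 1 1) * ((Y B).1 * (Y B).2)
      + (A:M2).det * (Y B).2 ^ 2 = D ^ 2 * (B:M2).det := by
  have e := hY B hB
  have hdet : (D • (B:M2)).det = D ^ 2 * (B:M2).det := by
    rw [Matrix.det_smul]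
    norm_num
  rw [e] at hdet
  rw [← hdet, det_eq A, Matrix.det_fin_two]
  simp only [Matrix.add_apply, Matrix.smul_apply, smul_eq_mul, Matrix.one_apply]
  norm_num
  ring

end Laws

lemma int_abs_le_of_sq_le {x K : ℤ} (h : x ^ 2 ≤ K) : |x| ≤ K := by
  rcases eq_or_ne x 0 with rfl | hx
  · simpa using by nlinarith [h]
  · have h1 : 1 ≤ |x| := Int.one_le_abs hx
    calc |x| = 1 * |x| := (one_mul _).symm
      _ ≤ |x| * |x| := by apply mul_le_mul h1 le_rfl (abs_nonneg x) (abs_nonneg x)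
      _ = x ^ 2 := by rw [abs_mul_abs_self x]; ring
      _ ≤ K := h

section Cases

variable {A : GL2} {D : ℤ} {Y : GL2 → ℤ × ℤ}

lemma hAC (A : GL2) : A ∈ Subgroup.centralizer {A} :=
  Subgroup.mem_centralizer_iff.mpr (by rintro h rfl; rfl)

lemma Y_inj (hD : D ≠ 0)
    (hY : ∀ B ∈ Subgroup.centralizer {A},
      D • (B:M2) = (Y B).1 • (1:M2) + (Y B).2 • (A:M2)) :
    Function.Injective (fun B : (Subgroup.centralizer {A} : Subgroup GL2) => Y (B : GL2)) := by
  intro B B' h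
  simp only at h
  have e1 := hY _ B.2
  have e2 := hY _ B'.2
  rw [h] at e1
  have : D • ((B:GL2):M2) = D • ((B':GL2):M2) := e1.trans e2.symm
  have hm : ((B:GL2):M2) = ((B':GL2):M2) := smul_right_injective M2 hD this
  exact Subtype.ext (Units.ext hm)

lemma YA_eq (hD : D ≠ 0)
    (hns : ¬((A:M2) 0 1 = 0 ∧ (A:M2) 1 0 = 0 ∧ (A:M2) 0 0 = (A:M2) 1 1))
    (hY : ∀ B ∈ Subgroup.centralizer {A},
      D • (B:M2) = (Y B).1 • (1:M2) + (Y B).2 • (A:M2)) :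
    Y A = (0, D) := by
  have e := hY A (hAC A)
  have e2 : (0:ℤ) • (1:M2) + D • (A:M2) = (Y A).1 • (1:M2) + (Y A).2 • (A:M2) := by
    rw [← e]; simp
  obtain ⟨h1, h2⟩ := unique_coords A hns e2
  exact Prod.ext h1.symm h2.symm

lemma finite_elliptic1 (hD : D ≠ 0)
    (hY : ∀ B ∈ Subgroup.centralizer {A},
      D • (B:M2) = (Y B).1 • (1:M2) + (Y B).2 • (A:M2))
    (hδ : (A:M2).det = 1) (hτ : ((A:M2) 0 0 + (A:M2) 1 1) ^ 2 < 4) :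
    Finite (Subgroup.centralizer {A} : Subgroup GL2) := by
  rw [← Set.finite_univ_iff]
  refine box_fin _ (Y_inj hD hY) ((2 * D ^ 2 : ℤ) : ℝ) Set.univ ?_
  intro B _
  set τ := (A:M2) 0 0 + (A:M2) 1 1 with hτdef
  have hτ1 : -1 ≤ τ ∧ τ ≤ 1 := by
    constructor
    · by_contra hcon
      push_neg at hcon
      nlinarith [mul_nonneg (by linarith : (0:ℤ) ≤ -τ - 2) (by linarith : (0:ℤ) ≤ -τ)]
    · by_contra hcon
      push_neg at hcon
      nlinarith [mul_nonneg (by linarith : (0:ℤ) ≤ τ - 2) (by linarith : (0:ℤ) ≤ τ)]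
  have hn := norm_law hY B.2
  rw [hδ, ← hτdef] at hn
  set x := (Y (B:GL2)).1
  set y := (Y (B:GL2)).2
  have hdet := det_pm (B : GL2)
  have hsq : x ^ 2 + y ^ 2 ≤ 2 * D ^ 2 := by
    rcases hdet with h | h
    · rw [h] at hn
      nlinarith [mul_nonneg (by linarith : (0:ℤ) ≤ 1 + τ) (sq_nonneg (x + y)),
        mul_nonneg (by linarith : (0:ℤ) ≤ 1 - τ) (sq_nonneg (x - y))]
    · rw [h] at hn
      exfalso
      have hD2 : 0 < D ^ 2 := by rcases hD.lt_or_gt with h' | h' <;> nlinarith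
      nlinarith [mul_nonneg (by linarith : (0:ℤ) ≤ 1 + τ) (sq_nonneg (x + y)),
        mul_nonneg (by linarith : (0:ℤ) ≤ 1 - τ) (sq_nonneg (x - y)), sq_nonneg x, sq_nonneg y]
  constructor
  · have : |x| ≤ 2 * D ^ 2 := int_abs_le_of_sq_le (by nlinarith)
    exact_mod_cast this
  · have : |y| ≤ 2 * D ^ 2 := int_abs_le_of_sq_le (by nlinarith)
    exact_mod_cast this

lemma finite_elliptic2 (hD : D ≠ 0)
    (hY : ∀ B ∈ Subgroup.centralizer {A},
      D • (B:M2) = (Y B).1 • (1:M2) + (Y B).2 • (A:M2))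
    (hδ : (A:M2).det = -1) (hτ0 : (A:M2) 0 0 + (A:M2) 1 1 = 0) :
    Finite (Subgroup.centralizer {A} : Subgroup GL2) := by
  rw [← Set.finite_univ_iff]
  refine box_fin _ (Y_inj hD hY) ((D ^ 2 : ℤ) : ℝ) Set.univ ?_
  intro B _
  have hn := norm_law hY B.2
  rw [hδ, hτ0] at hn
  set x := (Y (B:GL2)).1
  set y := (Y (B:GL2)).2
  have hdet := det_pm (B : GL2)
  have hmn : (x - y) * (x + y) = D ^ 2 ∨ (x - y) * (x + y) = -D ^ 2 := by
    rcases hdet with h | h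
    · left; rw [h] at hn; linear_combination hn
    · right; rw [h] at hn; linear_combination hn
  have habs : |x - y| * |x + y| = D ^ 2 := by
    rcases hmn with h | h
    · rw [← abs_mul, h, abs_of_nonneg (by positivity)]
    · rw [← abs_mul, h, abs_neg, abs_of_nonneg (by positivity)]
  have hm0 : 1 ≤ |x - y| := by
    rcases eq_or_ne (x - y) 0 with h | h
    · exfalso; rw [h] at habs; simp at habs; exact hD (by nlinarith [habs])
    · exact Int.one_le_abs h
  have hn0 : 1 ≤ |x + y| := by
    rcases eq_or_ne (x + y) 0 with h | h
    · exfalso; rw [h] at habs; simp at habs; exact hD (by nlinarith [habs])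
    · exact Int.one_le_abs h
  have hb1 : |x - y| ≤ D ^ 2 := by nlinarith
  have hb2 : |x + y| ≤ D ^ 2 := by nlinarith
  rw [abs_le] at hb1 hb2
  constructor
  · have : |x| ≤ D ^ 2 := abs_le.mpr ⟨by linarith, by linarith⟩
    exact_mod_cast this
  · have : |y| ≤ D ^ 2 := abs_le.mpr ⟨by linarith, by linarith⟩
    exact_mod_cast this

end Cases

section Parabolic

variable {A : GL2} {D : ℤ} {Y : GL2 → ℤ × ℤ}

lemma parabolic
    (hns : ¬((A:M2) 0 1 = 0 ∧ (A:M2) 1 0 = 0 ∧ (A:M2) 0 0 = (A:M2) 1 1))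
    (hD : D ≠ 0)
    (hY : ∀ B ∈ Subgroup.centralizer {A},
      D • (B:M2) = (Y B).1 • (1:M2) + (Y B).2 • (A:M2))
    {ε : ℤ} (hε : ε = 1 ∨ ε = -1)
    (hδ : (A:M2).det = 1) (hτ : (A:M2) 0 0 + (A:M2) 1 1 = 2 * ε) :
    ((Subgroup.zpowers A).subgroupOf (Subgroup.centralizer {A})).FiniteIndex := by
  have hε2 : ε ^ 2 = 1 := by rcases hε with rfl | rfl <;> norm_num
  have hε0 : ε ≠ 0 := by rcases hε with rfl | rfl <;> norm_num
  -- key fact: for B in the centralizer, (x + ε y)^2 = D^2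
  have husq : ∀ B ∈ Subgroup.centralizer {A}, ((Y B).1 + ε * (Y B).2) ^ 2 = D ^ 2 := by
    intro B hB
    have hn := norm_law hY hB
    rw [hδ, hτ] at hn
    rcases det_pm B with h | h
    · rw [h] at hn; linear_combination hn + (Y B).2 ^ 2 * hε2
    · exfalso
      rw [h] at hn
      have hD2 : 0 < D ^ 2 := by rcases hD.lt_or_gt with h' | h' <;> nlinarith
      have key : ((Y B).1 + ε * (Y B).2) ^ 2 = -D ^ 2 := by
        linear_combination hn + (Y B).2 ^ 2 * hε2
      linarith [sq_nonneg ((Y B).1 + ε * (Y B).2), hD2, key]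
  have hune : ∀ B ∈ Subgroup.centralizer {A}, (Y B).1 + ε * (Y B).2 ≠ 0 := by
    intro B hB h0
    have := husq B hB
    rw [h0] at this
    exact hD (by nlinarith)
  set C := Subgroup.centralizer ({A} : Set GL2) with hC
  let f : C → ℝ := fun B => ((Y (B:GL2)).2 : ℝ) / (((Y (B:GL2)).1 : ℝ) + ε * (Y (B:GL2)).2)
  have hden : ∀ B : C, (((Y (B:GL2)).1 : ℝ) + ε * (Y (B:GL2)).2) ≠ 0 := by
    intro B
    have := hune _ B.2
    intro h
    exact this (by exact_mod_cast h)
  refine finish_hom A C (hAC A) f ?_ ?_ ?_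
  · -- homomorphism
    intro B B'
    obtain ⟨pl1, pl2⟩ := prod_law hns hY B.2 B'.2
    rw [hδ] at pl1; rw [hτ] at pl2
    set x := (Y (B:GL2)).1 with hx
    set y := (Y (B:GL2)).2 with hy
    set x' := (Y (B':GL2)).1 with hx'
    set y' := (Y (B':GL2)).2 with hy'
    have hcoe : ((B * B' : C) : GL2) = (B : GL2) * (B' : GL2) := rfl
    set x'' := (Y ((B:GL2) * (B':GL2))).1 with hx''
    set y'' := (Y ((B:GL2) * (B':GL2))).2 with hy''
    have key1 : D * (x'' + ε * y'') = (x + ε * y) * (x' + ε * y') := by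
      linear_combination pl1 + ε * pl2 + y * y' * hε2
    have c1 : ((x : ℝ) + ε * y) ≠ 0 := hden B
    have c2 : ((x' : ℝ) + ε * y') ≠ 0 := hden B'
    have c3 : ((x'' : ℝ) + ε * y'') ≠ 0 := by
      have key1' : (x'' + ε * y'') * D = (x + ε * y) * (x' + ε * y') := by
        linear_combination key1
      have h12 : ((x'' : ℝ) + ε * y'') * D = ((x:ℝ) + ε * y) * ((x':ℝ) + ε * y') := by
        exact_mod_cast key1'
      intro h0
      rw [h0, zero_mul] at h12
      exact (mul_ne_zero c1 c2) h12.symm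
    have k1 : (D : ℝ) * ((x'':ℝ) + ε * y'') = ((x:ℝ) + ε * y) * ((x':ℝ) + ε * y') := by
      exact_mod_cast key1
    have k2 : (D : ℝ) * (y'' : ℝ) = (x:ℝ) * y' + (x':ℝ) * y + 2 * ε * (y * y') := by
      exact_mod_cast pl2
    show ((y'' : ℝ)) / ((x'':ℝ) + ε * y'') = (y:ℝ) / ((x:ℝ) + ε * y) + (y':ℝ) / ((x':ℝ) + ε * y')
    rw [div_add_div _ _ c1 c2, div_eq_div_iff c3 (mul_ne_zero c1 c2)]
    have hDr : (D : ℝ) ≠ 0 := by exact_mod_cast hD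
    -- multiply both sides by D and use k1, k2
    apply mul_left_cancel₀ hDr
    linear_combination (((x:ℝ) + ε * y) * ((x':ℝ) + ε * y')) * k2
      - ((y:ℝ) * ((x':ℝ) + ε * y') + ((x:ℝ) + ε * y) * (y':ℝ)) * k1
  · -- f (A) ≠ 0
    have hYA : Y A = (0, D) := YA_eq hD hns hY
    show ((Y A).2 : ℝ) / (((Y A).1 : ℝ) + ε * (Y A).2) ≠ 0
    rw [hYA]
    have hDr : (D : ℝ) ≠ 0 := by exact_mod_cast hD
    have hεr : (ε : ℝ) ≠ 0 := by exact_mod_cast hε0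
    push_cast
    simp only [zero_add]
    exact div_ne_zero hDr (mul_ne_zero hεr hDr)
  · -- finiteness of bounded sets
    intro M
    refine box_fin _ (Y_inj hD hY) (|(D:ℝ)| + |(D:ℝ)| * M) _ ?_
    intro B hB
    change |f B| ≤ M at hB
    set x := (Y (B:GL2)).1 with hx
    set y := (Y (B:GL2)).2 with hy
    have habs : |(x:ℝ) + ε * y| = |(D:ℝ)| := by
      have h := husq _ B.2
      have : ((x:ℝ) + ε * y) ^ 2 = (D:ℝ) ^ 2 := by exact_mod_cast h
      have := abs_eq_abs.mpr (sq_eq_sq_iff_eq_or_eq_neg.mp this)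
      exact this
    have hfB : |f B| = |(y:ℝ)| / |(x:ℝ) + ε * y| := by
      show |(y:ℝ) / ((x:ℝ) + ε * y)| = _
      rw [abs_div]
    have hy_le : |(y:ℝ)| ≤ |(D:ℝ)| * M := by
      have hd0 : (0:ℝ) < |(x:ℝ) + ε * y| := abs_pos.mpr (hden B)
      rw [hfB, div_le_iff₀ hd0] at hB
      calc |(y:ℝ)| ≤ M * |(x:ℝ) + ε * y| := hB
        _ = |(D:ℝ)| * M := by rw [habs]; ring
    constructor
    · have : |(x:ℝ)| ≤ |(x:ℝ) + ε * y| + |(ε:ℝ) * y| := by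
        calc |(x:ℝ)| = |((x:ℝ) + ε * y) - ε * y| := by ring_nf
          _ ≤ |(x:ℝ) + ε * y| + |(ε:ℝ) * y| := abs_sub _ _
      have hεy : |(ε:ℝ) * y| = |(y:ℝ)| := by
        rw [abs_mul]
        have : |(ε:ℝ)| = 1 := by rcases hε with rfl | rfl <;> norm_num
        rw [this, one_mul]
      rw [habs, hεy] at this
      calc |(x:ℝ)| ≤ |(D:ℝ)| + |(y:ℝ)| := this
        _ ≤ |(D:ℝ)| + |(D:ℝ)| * M := by linarith
    · calc |(y:ℝ)| ≤ |(D:ℝ)| * M := hy_le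
        _ ≤ |(D:ℝ)| + |(D:ℝ)| * M := by linarith [abs_nonneg ((D:ℝ))]
end Parabolic

section Hyperbolic

variable {A : GL2} {D : ℤ} {Y : GL2 → ℤ × ℤ}

lemma hyperbolic
    (hns : ¬((A:M2) 0 1 = 0 ∧ (A:M2) 1 0 = 0 ∧ (A:M2) 0 0 = (A:M2) 1 1))
    (hD : D ≠ 0)
    (hY : ∀ B ∈ Subgroup.centralizer {A},
      D • (B:M2) = (Y B).1 • (1:M2) + (Y B).2 • (A:M2))
    (hΔ : 0 < ((A:M2) 0 0 + (A:M2) 1 1) ^ 2 - 4 * (A:M2).det)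
    (h1 : (A:M2) 0 0 + (A:M2) 1 1 - (A:M2).det ≠ 1)
    (h2 : (A:M2) 0 0 + (A:M2) 1 1 + (A:M2).det ≠ -1) :
    ((Subgroup.zpowers A).subgroupOf (Subgroup.centralizer {A})).FiniteIndex := by
  set τ : ℤ := (A:M2) 0 0 + (A:M2) 1 1 with hτdef
  set δ : ℤ := (A:M2).det with hδdef
  have hδ0 : δ ≠ 0 := by rcases det_pm A with h | h <;> rw [← hδdef] at h <;> omega
  have hΔr : (0:ℝ) < (τ:ℝ)^2 - 4 * δ := by exact_mod_cast hΔ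
  set sq : ℝ := Real.sqrt ((τ:ℝ)^2 - 4 * δ) with hsqdef
  have hs2 : sq ^ 2 = (τ:ℝ)^2 - 4 * δ := Real.sq_sqrt hΔr.le
  have hs0 : 0 < sq := Real.sqrt_pos.mpr hΔr
  set lam : ℝ := ((τ:ℝ) + sq) / 2 with hlamdef
  set lam' : ℝ := ((τ:ℝ) - sq) / 2 with hlam'def
  have hsum : lam + lam' = (τ:ℝ) := by rw [hlamdef, hlam'def]; ring
  have hprod : lam * lam' = (δ:ℝ) := by
    rw [hlamdef, hlam'def]; linear_combination (-1/4 : ℝ) * hs2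
  have hdiff : lam - lam' = sq := by rw [hlamdef, hlam'def]; ring
  have hlam2 : lam ^ 2 = (τ:ℝ) * lam - δ := by
    rw [hlamdef]; linear_combination (1/4 : ℝ) * hs2
  have hlam0 : lam ≠ 0 := by
    intro h
    rw [h, zero_mul] at hprod
    exact hδ0 (by exact_mod_cast hprod.symm)
  have hDr : ((D:ℝ)) ≠ 0 := by exact_mod_cast hD
  have hD2 : (0:ℝ) < (D:ℝ)^2 := by positivity
  set C := Subgroup.centralizer ({A} : Set GL2) with hC
  let g : C → ℝ := fun B => ((Y (B:GL2)).1 : ℝ) + ((Y (B:GL2)).2 : ℝ) * lam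
  let g' : C → ℝ := fun B => ((Y (B:GL2)).1 : ℝ) + ((Y (B:GL2)).2 : ℝ) * lam'
  have habsprod : ∀ B : C, |g B| * |g' B| = (D:ℝ)^2 := by
    intro B
    have hn := norm_law hY B.2
    rw [← hτdef, ← hδdef] at hn
    have hprodgg : g B * g' B = ((D:ℝ)^2) * (((B:GL2):M2).det : ℝ) := by
      show (((Y (B:GL2)).1 : ℝ) + ((Y (B:GL2)).2 : ℝ) * lam)
          * (((Y (B:GL2)).1 : ℝ) + ((Y (B:GL2)).2 : ℝ) * lam') = _
      have hnr : ((Y (B:GL2)).1 : ℝ)^2 + (τ:ℝ) * ((Y (B:GL2)).1 * (Y (B:GL2)).2)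
          + (δ:ℝ) * ((Y (B:GL2)).2:ℝ)^2 = (D:ℝ)^2 * (((B:GL2):M2).det : ℝ) := by
        exact_mod_cast hn
      linear_combination hnr + (((Y (B:GL2)).1:ℝ) * ((Y (B:GL2)).2:ℝ)) * hsum
        + (((Y (B:GL2)).2:ℝ)^2) * hprod
    rw [← abs_mul, hprodgg]
    rcases det_pm (B:GL2) with h | h
    · rw [h]
      push_cast
      rw [mul_one, abs_of_nonneg (by positivity : (0:ℝ) ≤ (D:ℝ)^2)]
    · rw [h]
      push_cast
      rw [mul_neg_one, abs_neg, abs_of_nonneg (by positivity : (0:ℝ) ≤ (D:ℝ)^2)]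
  have hg0 : ∀ B : C, g B ≠ 0 := by
    intro B h
    have := habsprod B
    rw [h, abs_zero, zero_mul] at this
    exact absurd this.symm (by positivity)
  have hg'0 : ∀ B : C, g' B ≠ 0 := by
    intro B h
    have := habsprod B
    rw [h, abs_zero, mul_zero] at this
    exact absurd this.symm (by positivity)
  let f : C → ℝ := fun B => Real.log |g B| - Real.log |(D:ℝ)|
  refine finish_hom A C (hAC A) f ?_ ?_ ?_
  · -- homomorphism
    intro B B'
    obtain ⟨pl1, pl2⟩ := prod_law hns hY B.2 B'.2
    rw [← hδdef] at pl1; rw [← hτdef] at pl2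
    have k1 : (D:ℝ) * ((Y ((B:GL2) * (B':GL2))).1 : ℝ)
        = ((Y (B:GL2)).1:ℝ) * ((Y (B':GL2)).1:ℝ) - (δ:ℝ) * (((Y (B:GL2)).2:ℝ) * ((Y (B':GL2)).2:ℝ)) := by
      exact_mod_cast pl1
    have k2 : (D:ℝ) * ((Y ((B:GL2) * (B':GL2))).2 : ℝ)
        = ((Y (B:GL2)).1:ℝ) * ((Y (B':GL2)).2:ℝ) + ((Y (B':GL2)).1:ℝ) * ((Y (B:GL2)).2:ℝ)
          + (τ:ℝ) * (((Y (B:GL2)).2:ℝ) * ((Y (B':GL2)).2:ℝ)) := by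
      exact_mod_cast pl2
    have key : (D:ℝ) * g (B * B') = g B * g B' := by
      show (D:ℝ) * (((Y ((B:GL2) * (B':GL2))).1 : ℝ) + ((Y ((B:GL2) * (B':GL2))).2 : ℝ) * lam) = _
      linear_combination k1 + lam * k2 - (((Y (B:GL2)).2:ℝ) * ((Y (B':GL2)).2:ℝ)) * hlam2
    have habs : |(D:ℝ)| * |g (B * B')| = |g B| * |g B'| := by
      rw [← abs_mul, ← abs_mul, key]
    have hlogs := congrArg Real.log habs
    rw [Real.log_mul (abs_ne_zero.mpr hDr) (abs_ne_zero.mpr (hg0 (B * B'))),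
      Real.log_mul (abs_ne_zero.mpr (hg0 B)) (abs_ne_zero.mpr (hg0 B'))] at hlogs
    show Real.log |g (B * B')| - Real.log |(D:ℝ)|
        = (Real.log |g B| - Real.log |(D:ℝ)|) + (Real.log |g B'| - Real.log |(D:ℝ)|)
    linarith
  · -- f A ≠ 0
    have hYA : Y A = (0, D) := YA_eq hD hns hY
    show Real.log |g ⟨A, hAC A⟩| - Real.log |(D:ℝ)| ≠ 0
    have hgA : g ⟨A, hAC A⟩ = (D:ℝ) * lam := by
      show ((Y A).1 : ℝ) + ((Y A).2 : ℝ) * lam = _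
      rw [hYA]
      norm_num
    rw [hgA, abs_mul, Real.log_mul (abs_ne_zero.mpr hDr) (abs_ne_zero.mpr hlam0)]
    intro hcon
    have hlog0 : Real.log |lam| = 0 := by linarith
    rcases Real.log_eq_zero.mp hlog0 with h | h | h
    · exact absurd h (abs_ne_zero.mpr hlam0)
    · rcases abs_eq (by norm_num : (0:ℝ) ≤ 1) |>.mp h with h' | h'
      · -- lam = 1, so lam' = τ - 1 and (τ - 1) = δ
        have hreal : (τ:ℝ) - 1 = (δ:ℝ) := by
          have hl' : lam' = (τ:ℝ) - 1 := by rw [← hsum, h']; ring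
          rw [← hl', ← hprod, h', one_mul]
        refine h1 ?_
        have hcast : ((τ - δ : ℤ):ℝ) = 1 := by push_cast; linarith
        exact_mod_cast hcast
      · -- lam = -1, so lam' = τ + 1 and -(τ+1) = δ
        have hreal : -((τ:ℝ) + 1) = (δ:ℝ) := by
          have hl' : lam' = (τ:ℝ) + 1 := by rw [← hsum, h']; ring
          rw [← hprod, h', hl']; ring
        refine h2 ?_
        have hcast : ((τ + δ : ℤ):ℝ) = -1 := by push_cast; linarith
        exact_mod_cast hcast
    · -- |lam| = -1 impossible
      linarith [abs_nonneg lam, h]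
  · -- finiteness
    intro M
    set K1 : ℝ := Real.exp (M + Real.log |(D:ℝ)|) with hK1
    set K2 : ℝ := Real.exp (Real.log |(D:ℝ)| - M) with hK2
    set K3 : ℝ := (D:ℝ)^2 / K2 with hK3
    have hK2pos : 0 < K2 := Real.exp_pos _
    have hK1pos : 0 < K1 := Real.exp_pos _
    have hK3pos : 0 < K3 := by positivity
    set Ky : ℝ := (K1 + K3) / sq with hKy
    set Kx : ℝ := K1 + Ky * |lam| with hKx
    have hKypos : 0 < Ky := by positivity
    have hKxpos : 0 < Kx := by positivity
    refine box_fin _ (Y_inj hD hY) (Kx + Ky) _ ?_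
    intro B hB
    change |f B| ≤ M at hB
    have hfB := abs_le.mp hB
    have hL : 0 < |g B| := abs_pos.mpr (hg0 B)
    have hup : |g B| ≤ K1 := by
      rw [← Real.exp_log hL, hK1]
      apply Real.exp_le_exp.mpr
      have : Real.log |g B| - Real.log |(D:ℝ)| ≤ M := hfB.2
      linarith
    have hlow : K2 ≤ |g B| := by
      rw [← Real.exp_log hL, hK2]
      apply Real.exp_le_exp.mpr
      have h' : -M ≤ Real.log |g B| - Real.log |(D:ℝ)| := hfB.1
      linarith
    have hg'le : |g' B| ≤ K3 := by
      rw [hK3, le_div_iff₀ hK2pos]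
      calc |g' B| * K2 ≤ |g' B| * |g B| := by
            apply mul_le_mul_of_nonneg_left hlow (abs_nonneg _)
        _ = |g B| * |g' B| := by ring
        _ = (D:ℝ)^2 := habsprod B
    have hgdiff : g B - g' B = ((Y (B:GL2)).2 : ℝ) * sq := by
      show (((Y (B:GL2)).1 : ℝ) + ((Y (B:GL2)).2 : ℝ) * lam)
        - (((Y (B:GL2)).1 : ℝ) + ((Y (B:GL2)).2 : ℝ) * lam') = _
      rw [← hdiff]; ring
    have hyb : |((Y (B:GL2)).2 : ℝ)| ≤ Ky := by
      rw [hKy, le_div_iff₀ hs0]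
      calc |((Y (B:GL2)).2 : ℝ)| * sq = |((Y (B:GL2)).2 : ℝ)| * |sq| := by
            rw [abs_of_pos hs0]
        _ = |((Y (B:GL2)).2 : ℝ) * sq| := (abs_mul _ _).symm
        _ = |g B - g' B| := by rw [hgdiff]
        _ ≤ |g B| + |g' B| := abs_sub _ _
        _ ≤ K1 + K3 := add_le_add hup hg'le
    have hxb : |((Y (B:GL2)).1 : ℝ)| ≤ Kx := by
      have : ((Y (B:GL2)).1 : ℝ) = g B - ((Y (B:GL2)).2 : ℝ) * lam := by
        show _ = (((Y (B:GL2)).1 : ℝ) + ((Y (B:GL2)).2 : ℝ) * lam) - _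
        ring
      rw [this, hKx]
      calc |g B - ((Y (B:GL2)).2 : ℝ) * lam| ≤ |g B| + |((Y (B:GL2)).2 : ℝ) * lam| := abs_sub _ _
        _ = |g B| + |((Y (B:GL2)).2 : ℝ)| * |lam| := by rw [abs_mul]
        _ ≤ K1 + Ky * |lam| := by
            apply add_le_add hup
            apply mul_le_mul_of_nonneg_right hyb (abs_nonneg _)
    exact ⟨hxb.trans (by linarith), hyb.trans (by linarith)⟩

end Hyperbolic

lemma part_b (A : GL2) (h : A ∉ Subgroup.center GL2) :
    ((Subgroup.zpowers A).subgroupOf (Subgroup.centralizer {A})).FiniteIndex := by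
  have hns : ¬((A:M2) 0 1 = 0 ∧ (A:M2) 1 0 = 0 ∧ (A:M2) 0 0 = (A:M2) 1 1) := by
    intro hs
    exact h ((part_a A).mpr (scalar_eq A hs.1 hs.2.1 hs.2.2))
  obtain ⟨D, hD, Y, hY⟩ := exists_coords A hns
  rcases det_pm A with hδ | hδ
  · rcases lt_trichotomy (((A:M2) 0 0 + (A:M2) 1 1) ^ 2) 4 with ht | ht | ht
    · exact finish_fin A _ (finite_elliptic1 hD hY hδ ht)
    · have h4 : (((A:M2) 0 0 + (A:M2) 1 1) - 2) * (((A:M2) 0 0 + (A:M2) 1 1) + 2) = 0 := by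
        linear_combination ht
      have hτ : (A:M2) 0 0 + (A:M2) 1 1 = 2 * 1 ∨ (A:M2) 0 0 + (A:M2) 1 1 = 2 * (-1) := by
        rcases mul_eq_zero.mp h4 with h' | h' <;> [left; right] <;> omega
      rcases hτ with hτ | hτ
      · exact parabolic hns hD hY (Or.inl rfl) hδ hτ
      · exact parabolic hns hD hY (Or.inr rfl) hδ hτ
    · refine hyperbolic hns hD hY ?_ ?_ ?_
      · rw [hδ]; linarith
      · rw [hδ]
        intro hcon
        have h2 : (A:M2) 0 0 + (A:M2) 1 1 = 2 := by linarith
        rw [h2] at ht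
        norm_num at ht
      · rw [hδ]
        intro hcon
        have h2 : (A:M2) 0 0 + (A:M2) 1 1 = -2 := by linarith
        rw [h2] at ht
        norm_num at ht
  · rcases eq_or_ne ((A:M2) 0 0 + (A:M2) 1 1) 0 with ht | ht
    · exact finish_fin A _ (finite_elliptic2 hD hY hδ ht)
    · refine hyperbolic hns hD hY ?_ ?_ ?_
      · rw [hδ]; nlinarith [sq_nonneg ((A:M2) 0 0 + (A:M2) 1 1)]
      · rw [hδ]; omega
      · rw [hδ]; omega

end Stmt17

/-- (a) The centre of `GL₂(ℤ)` consists precisely of `I₂` and `-I₂`; (b) every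
non-central `A ∈ GL₂(ℤ)` generates a subgroup `⟨A⟩` of finite index in its own
centraliser. -/
theorem stmt17 :
    (∀ A : Matrix.GeneralLinearGroup (Fin 2) ℤ,
        A ∈ Subgroup.center (Matrix.GeneralLinearGroup (Fin 2) ℤ) ↔ A = 1 ∨ A = -1) ∧
    (∀ A : Matrix.GeneralLinearGroup (Fin 2) ℤ,
        A ∉ Subgroup.center (Matrix.GeneralLinearGroup (Fin 2) ℤ) →
        ((Subgroup.zpowers A).subgroupOf (Subgroup.centralizer {A})).FiniteIndex) :=
  ⟨Stmt17.part_a, Stmt17.part_b⟩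
end

section
/- Let F₂ = ⟨a,b⟩ be a free group of rank 2 and let φ ∈ Aut(F₂) be the automorphism defined by aφ = ab^k and bφ = b, where k is a nonzero integer. Then for every nonzero integer r, the fixed subgroup of φ^r equals the fixed subgroup of φ, which equals the subgroup ⟨aba⁻¹, b⟩. -/
open Multiplicative

/-- The fixed subgroup `Fix ψ = {x : ψ x = x}` of an automorphism `ψ`. -/
def fixSubgroup {G : Type*} [Group G] (ψ : MulAut G) : Subgroup G where
  carrier := {x | ψ x = x}
  one_mem' := map_one ψ
  mul_mem' := by
    intro x y hx hy
    simp only [Set.mem_setOf_eq] at *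
    rw [map_mul, hx, hy]
  inv_mem' := by
    intro x hx
    simp only [Set.mem_setOf_eq] at *
    rw [map_inv, hx]

namespace Aux18

abbrev F := FreeGroup (Fin 2)

noncomputable def a : F := FreeGroup.of 0
noncomputable def b : F := FreeGroup.of 1

def R : Bool × ℤ → Bool × ℤ → Prop := fun p q => p.2 = 0 → p.1 = q.1

def Red (l : List (Bool × ℤ)) : Prop := l.Chain' R

def S := {p : ℤ × List (Bool × ℤ) // Red p.2}

noncomputable def evL : List (Bool × ℤ) → F
  | [] => 1
  | (e, c) :: r => (cond e a a⁻¹) * b ^ c * evL r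

noncomputable def ev (p : ℤ × List (Bool × ℤ)) : F := b ^ p.1 * evL p.2

/-- left multiplication by `a` on syllable forms -/
def aMul : ℤ × List (Bool × ℤ) → ℤ × List (Bool × ℤ)
  | (c₀, (false, c) :: r) =>
      if c₀ = 0 then (c, r) else (0, (true, c₀) :: (false, c) :: r)
  | (c₀, (true, c) :: r) => (0, (true, c₀) :: (true, c) :: r)
  | (c₀, []) => (0, [(true, c₀)])

/-- left multiplication by `a⁻¹` on syllable forms -/
def aInvMul : ℤ × List (Bool × ℤ) → ℤ × List (Bool × ℤ)
  | (c₀, (true, c) :: r) =>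
      if c₀ = 0 then (c, r) else (0, (false, c₀) :: (true, c) :: r)
  | (c₀, (false, c) :: r) => (0, (false, c₀) :: (false, c) :: r)
  | (c₀, []) => (0, [(false, c₀)])

lemma red_aMul {p : ℤ × List (Bool × ℤ)} (h : Red p.2) : Red (aMul p).2 := by
  obtain ⟨c₀, l⟩ := p
  match l with
  | [] => simp [aMul, Red, List.Chain']
  | (true, c) :: r =>
      simp only [aMul]
      exact List.IsChain.cons_cons (fun _ => rfl) h
  | (false, c) :: r =>
      simp only [aMul]
      split_ifs with h0
      · exact h.tail
      · exact List.IsChain.cons_cons (fun hc => absurd hc h0) h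

lemma red_aInvMul {p : ℤ × List (Bool × ℤ)} (h : Red p.2) : Red (aInvMul p).2 := by
  obtain ⟨c₀, l⟩ := p
  match l with
  | [] => simp [aInvMul, Red, List.Chain']
  | (false, c) :: r =>
      simp only [aInvMul]
      exact List.IsChain.cons_cons (fun _ => rfl) h
  | (true, c) :: r =>
      simp only [aInvMul]
      split_ifs with h0
      · exact h.tail
      · exact List.IsChain.cons_cons (fun hc => absurd hc h0) h

lemma aInvMul_aMul {p : ℤ × List (Bool × ℤ)} (h : Red p.2) : aInvMul (aMul p) = p := by
  obtain ⟨c₀, l⟩ := p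
  match l with
  | [] => simp [aMul, aInvMul]
  | (true, c) :: r => simp [aMul, aInvMul]
  | (false, c) :: r =>
      simp only [aMul]
      split_ifs with h0
      · subst h0
        match r with
        | [] => simp [aInvMul]
        | (false, c') :: r' => simp [aInvMul]
        | (true, c') :: r' =>
            have hc : c ≠ 0 := fun hc =>
              Bool.noConfusion ((List.isChain_cons_cons.mp h).1 hc)
            simp [aInvMul, hc]
      · simp [aInvMul]

lemma aMul_aInvMul {p : ℤ × List (Bool × ℤ)} (h : Red p.2) : aMul (aInvMul p) = p := by
  obtain ⟨c₀, l⟩ := p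
  match l with
  | [] => simp [aMul, aInvMul]
  | (false, c) :: r => simp [aMul, aInvMul]
  | (true, c) :: r =>
      simp only [aInvMul]
      split_ifs with h0
      · subst h0
        match r with
        | [] => simp [aMul]
        | (true, c') :: r' => simp [aMul]
        | (false, c') :: r' =>
            have hc : c ≠ 0 := fun hc =>
              Bool.noConfusion ((List.isChain_cons_cons.mp h).1 hc)
            simp [aMul, hc]
      · simp [aMul]

noncomputable def alpha : Equiv.Perm S where
  toFun s := ⟨aMul s.1, red_aMul s.2⟩
  invFun s := ⟨aInvMul s.1, red_aInvMul s.2⟩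
  left_inv s := Subtype.ext (aInvMul_aMul s.2)
  right_inv s := Subtype.ext (aMul_aInvMul s.2)

noncomputable def beta : Equiv.Perm S where
  toFun s := ⟨(s.1.1 + 1, s.1.2), s.2⟩
  invFun s := ⟨(s.1.1 - 1, s.1.2), s.2⟩
  left_inv s := Subtype.ext (by simp)
  right_inv s := Subtype.ext (by simp)

noncomputable def rho : F →* Equiv.Perm S :=
  FreeGroup.lift (fun i => if i = 0 then alpha else beta)

lemma rho_a : rho a = alpha := by simp [rho, a, FreeGroup.lift_apply_of]
lemma rho_b : rho b = beta := by simp [rho, b, FreeGroup.lift_apply_of]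


lemma beta_zpow : ∀ (c : ℤ) (s : S),
    (beta ^ c) s = ⟨(s.1.1 + c, s.1.2), s.2⟩ := by
  have hinv : ∀ s : S, beta⁻¹ s = ⟨(s.1.1 - 1, s.1.2), s.2⟩ := fun s => by
    rw [Equiv.Perm.inv_def]; rfl
  intro c
  induction c using Int.induction_on with
  | zero => intro s; exact Subtype.ext (by simp)
  | succ n ih =>
      intro s
      rw [zpow_add_one, Equiv.Perm.mul_apply, ih (beta s)]
      exact Subtype.ext (Prod.ext (show s.1.1 + 1 + (n:ℤ) = s.1.1 + ((n:ℤ)+1) by ring) rfl)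
  | pred n ih =>
      intro s
      rw [show (-(n : ℤ) - 1) = (-(n:ℤ)) + (-1) by ring, zpow_add,
        Equiv.Perm.mul_apply, zpow_neg_one, hinv]
      erw [ih]
      exact Subtype.ext (by simp; ring)

lemma rho_bpow (c : ℤ) (s : S) :
    rho (b ^ c) s = ⟨(s.1.1 + c, s.1.2), s.2⟩ := by
  rw [map_zpow, rho_b, beta_zpow]

lemma ev_alpha (s : S) : ev ((alpha s) : S).1 = a * ev s.1 := by
  obtain ⟨⟨c₀, l⟩, hred⟩ := s
  show ev (aMul (c₀, l)) = a * ev (c₀, l)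
  match l with
  | [] => simp [aMul, ev, evL, mul_assoc]
  | (true, c) :: r => simp [aMul, ev, evL, mul_assoc]
  | (false, c) :: r =>
      simp only [aMul]
      split_ifs with h0
      · subst h0
        simp [ev, evL, mul_assoc]
      · simp [ev, evL, mul_assoc]

lemma ev_beta (s : S) : ev ((beta s) : S).1 = b * ev s.1 := by
  obtain ⟨⟨c₀, l⟩, hred⟩ := s
  show ev (c₀ + 1, l) = b * ev (c₀, l)
  simp only [ev]
  rw [show c₀ + 1 = 1 + c₀ by ring, zpow_add, zpow_one, mul_assoc]

lemma ev_rho (w : F) : ∀ s : S, ev (rho w s).1 = w * ev s.1 := by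
  induction w using FreeGroup.induction_on with
  | C1 => intro s; simp [ev]
  | of x =>
      intro s
      have h2 : ∀ y : Fin 2, y = 0 ∨ y = 1 := by decide
      have hx : (pure x : F) = FreeGroup.of x := rfl
      rcases h2 x with h | h <;> subst h
      · rw [show FreeGroup.of (0 : Fin 2) = a from rfl, rho_a]
        exact ev_alpha s
      · rw [show FreeGroup.of (1 : Fin 2) = b from rfl, rho_b]
        exact ev_beta s
  | inv_of x ih =>
      intro s
      have h2 : (rho ((FreeGroup.of x : F)⁻¹)) s = (rho (FreeGroup.of x))⁻¹ s := by rw [map_inv]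
      rw [h2]
      have h3 := ih ((rho (FreeGroup.of x))⁻¹ s)
      rw [show (rho (FreeGroup.of x)) ((rho (FreeGroup.of x))⁻¹ s) = s from
        Equiv.apply_symm_apply _ s] at h3
      rw [h3, inv_mul_cancel_left]
  | mul x y ihx ihy =>
      intro s
      rw [map_mul, Equiv.Perm.mul_apply, ihx, ihy, mul_assoc]

def s0 : S := ⟨(0, []), List.isChain_nil⟩

lemma aMul_push {c : ℤ} {r : List (Bool × ℤ)} (h : Red ((true, c) :: r)) :
    aMul (c, r) = (0, (true, c) :: r) := by
  match r with
  | [] => simp [aMul]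
  | (true, c') :: r' => simp [aMul]
  | (false, c') :: r' =>
      have hc : c ≠ 0 := fun hc => Bool.noConfusion ((List.isChain_cons_cons.mp h).1 hc)
      simp [aMul, hc]

lemma aInvMul_push {c : ℤ} {r : List (Bool × ℤ)} (h : Red ((false, c) :: r)) :
    aInvMul (c, r) = (0, (false, c) :: r) := by
  match r with
  | [] => simp [aInvMul]
  | (false, c') :: r' => simp [aInvMul]
  | (true, c') :: r' =>
      have hc : c ≠ 0 := fun hc => Bool.noConfusion ((List.isChain_cons_cons.mp h).1 hc)
      simp [aInvMul, hc]

lemma rho_ev : ∀ (l : List (Bool × ℤ)) (c₀ : ℤ) (h : Red l),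
    rho (ev (c₀, l)) s0 = ⟨(c₀, l), h⟩ := by
  intro l
  induction l with
  | nil =>
      intro c₀ h
      have : ev (c₀, []) = b ^ c₀ := by simp [ev, evL]
      rw [this, rho_bpow]
      exact Subtype.ext (by simp [s0])
  | cons p r ih =>
      obtain ⟨e, c⟩ := p
      intro c₀ h
      have hr : Red r := h.tail
      have hev : ev (c₀, (e, c) :: r) = b ^ c₀ * ((cond e a a⁻¹) * ev (c, r)) := by
        simp [ev, evL, mul_assoc]
      rw [hev, map_mul, map_mul, Equiv.Perm.mul_apply, Equiv.Perm.mul_apply, ih c hr]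
      cases e with
      | true =>
          have h1 : rho a ⟨(c, r), hr⟩ = ⟨(0, (true, c) :: r), h⟩ := by
            rw [rho_a]
            exact Subtype.ext (aMul_push h)
          simp only [cond]
          rw [h1]
          erw [rho_bpow]
          exact Subtype.ext (by simp)
      | false =>
          have h1 : rho a⁻¹ ⟨(c, r), hr⟩ = ⟨(0, (false, c) :: r), h⟩ := by
            rw [map_inv, rho_a, Equiv.Perm.inv_def]
            exact Subtype.ext (aInvMul_push h)
          simp only [cond]
          rw [h1]
          erw [rho_bpow]
          exact Subtype.ext (by simp)

lemma ev_inj {c₀ c₀' : ℤ} {l l' : List (Bool × ℤ)} (h : Red l) (h' : Red l')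
    (heq : ev (c₀, l) = ev (c₀', l')) : c₀ = c₀' ∧ l = l' := by
  have h1 := rho_ev l c₀ h
  rw [heq, rho_ev l' c₀' h'] at h1
  have := congrArg Subtype.val h1
  simp only [Prod.mk.injEq] at this
  exact ⟨this.1.symm, this.2.symm⟩

lemma ev_surj (w : F) : ∃ (c₀ : ℤ) (l : List (Bool × ℤ)), Red l ∧ w = ev (c₀, l) := by
  refine ⟨(rho w s0).1.1, (rho w s0).1.2, (rho w s0).2, ?_⟩
  have h := ev_rho w s0
  have h0 : ev s0.1 = 1 := by simp [s0, ev, evL]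
  rw [h0, mul_one] at h
  exact h.symm

def chi (k : ℤ) : List (Bool × ℤ) → ℤ
  | [] => 0
  | (e, _) :: _ => if e then 0 else k

def T (k : ℤ) : List (Bool × ℤ) → List (Bool × ℤ)
  | [] => []
  | (e, c) :: r => (e, c + (if e then k else 0) - chi k r) :: T k r

@[simp] lemma chi_nil (k : ℤ) : chi k [] = 0 := rfl
@[simp] lemma chi_cons_true (k c : ℤ) (r : List (Bool × ℤ)) :
    chi k ((true, c) :: r) = 0 := rfl
@[simp] lemma chi_cons_false (k c : ℤ) (r : List (Bool × ℤ)) :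
    chi k ((false, c) :: r) = k := rfl
@[simp] lemma T_nil (k : ℤ) : T k [] = [] := rfl
@[simp] lemma T_cons_true (k c : ℤ) (r : List (Bool × ℤ)) :
    T k ((true, c) :: r) = (true, c + k - chi k r) :: T k r := by
  show (true, c + (if true then k else 0) - chi k r) :: T k r = _
  norm_num
@[simp] lemma T_cons_false (k c : ℤ) (r : List (Bool × ℤ)) :
    T k ((false, c) :: r) = (false, c - chi k r) :: T k r := by
  show (false, c + (if false then k else 0) - chi k r) :: T k r = _
  norm_num

@[simp] lemma evL_nil : evL [] = 1 := rfl
@[simp] lemma evL_cons (e : Bool) (c : ℤ) (r : List (Bool × ℤ)) :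
    evL ((e, c) :: r) = (cond e a a⁻¹) * b ^ c * evL r := rfl

lemma phi_evL (k : ℤ) (ψ : MulAut F) (hψa : ψ a = a * b ^ k) (hψb : ψ b = b) :
    ∀ l : List (Bool × ℤ), ψ (evL l) = b ^ (-(chi k l)) * evL (T k l) := by
  have hbz : ∀ c : ℤ, ψ (b ^ c) = b ^ c := fun c => by rw [map_zpow, hψb]
  intro l
  induction l with
  | nil => simp
  | cons p r ih =>
      obtain ⟨e, c⟩ := p
      rw [evL_cons, map_mul, map_mul, hbz, ih]
      cases e with
      | true =>
          rw [chi_cons_true, T_cons_true, evL_cons]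
          simp only [cond, hψa, neg_zero, zpow_zero, one_mul]
          rw [show c + k - chi k r = k + (c + -(chi k r)) by ring, zpow_add, zpow_add]
          simp [mul_assoc, zpow_neg]
      | false =>
          have hainv : ψ a⁻¹ = b ^ (-k) * a⁻¹ := by
            rw [map_inv, hψa, mul_inv_rev, zpow_neg]
          rw [chi_cons_false, T_cons_false, evL_cons]
          simp only [cond, hainv]
          rw [show c - chi k r = c + -(chi k r) by ring, zpow_add]
          simp [mul_assoc, zpow_neg]

lemma phi_ev (k : ℤ) (ψ : MulAut F) (hψa : ψ a = a * b ^ k) (hψb : ψ b = b)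
    (c₀ : ℤ) (l : List (Bool × ℤ)) :
    ψ (ev (c₀, l)) = ev (c₀ - chi k l, T k l) := by
  have hbz : ψ (b ^ c₀) = b ^ c₀ := by rw [map_zpow, hψb]
  have h1 : ev (c₀, l) = b ^ c₀ * evL l := rfl
  have h2 : ev (c₀ - chi k l, T k l) = b ^ (c₀ - chi k l) * evL (T k l) := rfl
  rw [h1, h2, map_mul, hbz, phi_evL k ψ hψa hψb, ← mul_assoc, ← zpow_add,
    show c₀ + -(chi k l) = c₀ - chi k l by ring]

lemma red_T (k : ℤ) : ∀ l, Red l → Red (T k l) := by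
  intro l
  match l with
  | [] => intro _; simp [Red, List.Chain']
  | [(e, c)] =>
      intro _
      cases e <;> simp [Red, List.Chain']
  | (e, c) :: (e', c') :: r =>
      intro h
      obtain ⟨h1, h2⟩ := List.isChain_cons_cons.mp h
      have ihred : Red (T k ((e', c') :: r)) := red_T k ((e', c') :: r) h2
      have hT' : T k ((e', c') :: r) =
          (e', c' + (if e' then k else 0) - chi k r) :: T k r := by
        cases e' <;> simp
      have key : ∀ (X : ℤ), (X = 0 → e = e') → Red ((e, X) :: T k ((e', c') :: r)) := by
        intro X hX
        rw [hT']
        refine List.isChain_cons_cons.mpr ⟨fun hc => hX hc, ?_⟩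
        rw [← hT']
        exact ihred
      have hne : e ≠ e' → c ≠ 0 := fun hne hc => hne (h1 hc)
      cases e with
      | true =>
          cases e' with
          | true =>
              rw [T_cons_true, chi_cons_true]
              exact key _ (fun _ => rfl)
          | false =>
              rw [T_cons_true, chi_cons_false]
              exact key _ (fun hc => absurd (by omega : c = 0) (hne (by simp)))
      | false =>
          cases e' with
          | false =>
              rw [T_cons_false, chi_cons_false]
              exact key _ (fun _ => rfl)
          | true =>
              rw [T_cons_false, chi_cons_true]
              exact key _ (fun hc => absurd (by omega : c = 0) (hne (by simp)))

inductive Pat : List (Bool × ℤ) → Prop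
  | nil : Pat []
  | cons (c c' : ℤ) (r : List (Bool × ℤ)) : Pat r → Pat ((true, c) :: (false, c') :: r)

lemma pat_of_T (k : ℤ) (hk : k ≠ 0) :
    ∀ l, chi k l = 0 → T k l = l → Pat l
  | [] => fun _ _ => Pat.nil
  | (false, c) :: r => fun h1 _ => by
      rw [chi_cons_false] at h1
      exact absurd h1 hk
  | [(true, c)] => fun _ h2 => by
      simp only [T_cons_true, T_nil, chi_nil, List.cons.injEq, Prod.mk.injEq] at h2
      exact absurd (by omega : k = 0) hk
  | (true, c) :: (true, c') :: r => fun _ h2 => by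
      simp only [T_cons_true, chi_cons_true, List.cons.injEq, Prod.mk.injEq] at h2
      exact absurd (by omega : k = 0) hk
  | (true, c) :: (false, c') :: r => fun _ h2 => by
      simp only [T_cons_true, T_cons_false, chi_cons_false, List.cons.injEq,
        Prod.mk.injEq] at h2
      obtain ⟨⟨-, -⟩, ⟨-, hc'⟩, hTr⟩ := h2
      exact Pat.cons c c' r (pat_of_T k hk r (by omega) hTr)

lemma pat_mem {l : List (Bool × ℤ)} (h : Pat l) :
    ∀ c₀ : ℤ, ev (c₀, l) ∈ Subgroup.closure {a * b * a⁻¹, b} := by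
  have hb : b ∈ Subgroup.closure {a * b * a⁻¹, b} :=
    Subgroup.subset_closure (by simp)
  have hab : a * b * a⁻¹ ∈ Subgroup.closure {a * b * a⁻¹, b} :=
    Subgroup.subset_closure (by simp)
  induction h with
  | nil =>
      intro c₀
      have : ev (c₀, []) = b ^ c₀ := by simp [ev]
      rw [this]
      exact zpow_mem hb c₀
  | cons c c' r hr ih =>
      intro c₀
      have hev : ev (c₀, (true, c) :: (false, c') :: r) =
          b ^ c₀ * ((a * b * a⁻¹) ^ c * ev (c', r)) := by
        rw [conj_zpow]
        simp [ev, mul_assoc]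
      rw [hev]
      exact mul_mem (zpow_mem hb c₀) (mul_mem (zpow_mem hab c) (ih c'))

lemma fix_eq (k : ℤ) (hk : k ≠ 0) (ψ : MulAut F) (hψa : ψ a = a * b ^ k)
    (hψb : ψ b = b) :
    fixSubgroup ψ = Subgroup.closure {a * b * a⁻¹, b} := by
  apply le_antisymm
  · intro w hw
    have hw' : ψ w = w := hw
    obtain ⟨c₀, l, hred, rfl⟩ := ev_surj w
    have h1 : ev (c₀ - chi k l, T k l) = ev (c₀, l) := by
      rw [← phi_ev k ψ hψa hψb]; exact hw'
    obtain ⟨hc, hl⟩ := ev_inj (red_T k l hred) hred h1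
    exact pat_mem (pat_of_T k hk l (by omega) hl) c₀
  · rw [Subgroup.closure_le]
    intro x hx
    rcases hx with rfl | rfl
    · show ψ (a * b * a⁻¹) = a * b * a⁻¹
      rw [map_mul, map_mul, map_inv, hψa, hψb]
      group
    · exact hψb

lemma pow_nat (k : ℤ) (ψ : MulAut F) (hψa : ψ a = a * b ^ k) (hψb : ψ b = b) :
    ∀ n : ℕ, ((ψ ^ n) a = a * b ^ (k * n) ∧ (ψ ^ n) b = b) := by
  intro n
  induction n with
  | zero => simp [MulAut.one_apply]
  | succ n ih =>
      constructor
      · rw [pow_succ, MulAut.mul_apply, hψa, map_mul, map_zpow, ih.1, ih.2]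
        rw [mul_assoc, ← zpow_add]
        congr 2
        push_cast
        ring
      · rw [pow_succ, MulAut.mul_apply, hψb, ih.2]

lemma inv_ab (k : ℤ) (ψ : MulAut F) (hψa : ψ a = a * b ^ k) (hψb : ψ b = b) :
    ψ⁻¹ a = a * b ^ (-k) ∧ ψ⁻¹ b = b := by
  constructor
  · have h : ψ (a * b ^ (-k)) = a := by
      rw [map_mul, map_zpow, hψa, hψb, mul_assoc, ← zpow_add]
      simp
    calc ψ⁻¹ a = ψ⁻¹ (ψ (a * b ^ (-k))) := by rw [h]
      _ = a * b ^ (-k) := ψ.inv_apply_self _ _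
  · calc ψ⁻¹ b = ψ⁻¹ (ψ b) := by rw [hψb]
      _ = b := ψ.inv_apply_self _ _

lemma zpow_ab (k : ℤ) (ψ : MulAut F) (hψa : ψ a = a * b ^ k) (hψb : ψ b = b)
    (r : ℤ) : (ψ ^ r) a = a * b ^ (k * r) ∧ (ψ ^ r) b = b := by
  cases r with
  | ofNat n =>
      have h := pow_nat k ψ hψa hψb n
      rw [Int.ofNat_eq_coe, zpow_natCast]
      exact h
  | negSucc n =>
      obtain ⟨hia, hib⟩ := inv_ab k ψ hψa hψb
      have h := pow_nat (-k) ψ⁻¹ hia hib (n + 1)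
      rw [zpow_negSucc, ← inv_pow]
      refine ⟨?_, h.2⟩
      rw [h.1]
      congr 2
      push_cast [Int.negSucc_eq]
      ring

end Aux18

/-- If `φ` is the automorphism of `F₂ = ⟨a,b⟩` with `aφ = a * b^k`, `bφ = b` (`k ≠ 0`),
then for every nonzero integer `r` the fixed subgroup of `φ^r` equals that of `φ`,
which equals `⟨a b a⁻¹, b⟩`. -/
theorem stmt18 (k : ℤ) (hk : k ≠ 0) (a b : FreeGroup (Fin 2))
    (ha : a = FreeGroup.of 0) (hb : b = FreeGroup.of 1)
    (φ : MulAut (FreeGroup (Fin 2))) (hφa : φ a = a * b ^ k) (hφb : φ b = b)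
    (r : ℤ) (hr : r ≠ 0) :
    fixSubgroup (φ ^ r) = fixSubgroup φ ∧
    fixSubgroup φ = Subgroup.closure {a * b * a⁻¹, b} := by
  subst ha hb
  have hφa' : φ Aux18.a = Aux18.a * Aux18.b ^ k := hφa
  have hφb' : φ Aux18.b = Aux18.b := hφb
  have h1 : fixSubgroup φ = Subgroup.closure {Aux18.a * Aux18.b * Aux18.a⁻¹, Aux18.b} :=
    Aux18.fix_eq k hk φ hφa' hφb'
  obtain ⟨hra, hrb⟩ := Aux18.zpow_ab k φ hφa' hφb' r
  have h2 : fixSubgroup (φ ^ r) =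
      Subgroup.closure {Aux18.a * Aux18.b * Aux18.a⁻¹, Aux18.b} :=
    Aux18.fix_eq (k * r) (mul_ne_zero hk hr) (φ ^ r) hra hrb
  exact ⟨h2.trans h1.symm, h1⟩
end

section
/- Let F₂ = ⟨a,b⟩ be a free group of rank 2 and let φ ∈ Aut(F₂) be the automorphism defined by aφ = ab^k and bφ = b, where k is a nonzero integer. If r is a nonzero integer and w ∈ F₂ is such that wφ^r is conjugate to w in F₂, then w is conjugate in F₂ to an element fixed by φ. -/
open Multiplicative

namespace Stmt19
abbrev L2 := Fin 2 × Bool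
def Invl (p : L2) : L2 := (p.1, !p.2)
@[simp] lemma Invl_Invl (p : L2) : Invl (Invl p) = p := by cases p; simp [Invl]
lemma Invl_ne (p : L2) : Invl p ≠ p := by
  cases p with
  | mk i s => cases s <;> simp [Invl]
lemma Invl_inj {p q : L2} (h : Invl p = Invl q) : p = q := by
  have := congrArg Invl h; simpa using this
def Red (l : List L2) : Prop := List.Chain' (fun p q => q ≠ Invl p) l
def core : List L2 → List L2
  | [] => []
  | p :: t =>
    if t.getLast? = some (Invl p) then core t.dropLast else p :: t
termination_by l => l.length
decreasing_by
  simp only [List.length_cons, List.length_dropLast]; omega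
@[simp] lemma core_nil : core ([] : List L2) = [] := by rw [core]
lemma core_peel {p : L2} {t : List L2} (h : t.getLast? = some (Invl p)) :
    core (p :: t) = core t.dropLast := by rw [core, if_pos h]
lemma core_stay {p : L2} {t : List L2} (h : t.getLast? ≠ some (Invl p)) :
    core (p :: t) = p :: t := by rw [core, if_neg h]
lemma invl_singleton (p : L2) : (FreeGroup.mk [p])⁻¹ = FreeGroup.mk [Invl p] := by
  rw [FreeGroup.inv_mk]; rfl
lemma reduce_eq_self {l : List L2} (h : Red l) : FreeGroup.reduce l = l := by
  induction l with
  | nil => rfl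
  | cons p t ih =>
    have ht : FreeGroup.reduce t = t := ih h.tail
    rw [FreeGroup.reduce.cons, ht]
    cases t with
    | nil => rfl
    | cons q t' =>
      have hpq : q ≠ Invl p := List.isChain_cons_cons.mp h |>.1
      have : ¬ (p.1 = q.1 ∧ p.2 = !q.2) := by
        rintro ⟨h1, h2⟩
        apply hpq
        cases p; cases q
        simp only [Invl]
        simp_all
      simp [this]
lemma toWord_mk_red {l : List L2} (h : Red l) : (FreeGroup.mk l).toWord = l := by
  rw [FreeGroup.toWord_mk, reduce_eq_self h]
lemma red_reduce (l : List L2) : Red (FreeGroup.reduce l) := by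
  induction l with
  | nil => exact List.isChain_nil
  | cons p t ih =>
    rw [FreeGroup.reduce.cons]
    rcases h : FreeGroup.reduce t with _ | ⟨q, t'⟩
    · exact List.isChain_singleton _
    · rw [h] at ih
      by_cases hc : p.1 = q.1 ∧ p.2 = !q.2
      · simp only [if_pos hc]
        exact ih.tail
      · simp only [if_neg hc]
        refine List.IsChain.cons_cons ?_ ih
        intro he
        apply hc
        rw [he]
        exact ⟨rfl, by simp [Invl]⟩
lemma red_toWord (w : FreeGroup (Fin 2)) : Red w.toWord := by
  have := red_reduce w.toWord
  rwa [FreeGroup.reduce_toWord] at this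

def CycRed (l : List L2) : Prop :=
  Red l ∧ ∀ p q, l.head? = some p → l.getLast? = some q → q ≠ Invl p

lemma getLast?_cons_ne {p : L2} {t : List L2} (h : t ≠ []) :
    (p :: t).getLast? = t.getLast? := by
  cases t with
  | nil => exact absurd rfl h
  | cons q t' => exact List.getLast?_cons_cons

lemma core_of_cycRed {l : List L2} (h : CycRed l) : core l = l := by
  cases l with
  | nil => simp
  | cons p t =>
    apply core_stay
    intro hc
    have ht : t ≠ [] := by rintro rfl; simp at hc
    have : (p :: t).getLast? = some (Invl p) := by rw [getLast?_cons_ne ht]; exact hc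
    exact h.2 p (Invl p) rfl this rfl

lemma red_dropLast {l : List L2} (h : Red l) : Red l.dropLast :=
  h.prefix (List.dropLast_prefix l)

lemma cycRed_core : ∀ l : List L2, Red l → CycRed (core l)
  | [] => fun _ => by rw [core_nil]; exact ⟨List.isChain_nil, by simp⟩
  | p :: t => fun h => by
    by_cases hc : t.getLast? = some (Invl p)
    · rw [core_peel hc]
      exact cycRed_core t.dropLast (red_dropLast h.tail)
    · rw [core_stay hc]
      refine ⟨h, ?_⟩
      intro p' q hh hg
      rw [List.head?_cons, Option.some_inj] at hh
      subst hh
      cases ht : t with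
      | nil =>
        subst ht
        rw [List.getLast?_singleton, Option.some_inj] at hg
        subst hg
        exact fun he => Invl_ne _ he.symm
      | cons q' t' =>
        subst ht
        rw [getLast?_cons_ne (by simp)] at hg
        intro he
        exact hc (by rw [hg, he])
termination_by l => l.length
decreasing_by
  simp only [List.length_cons, List.length_dropLast]; omega

def bcount (l : List L2) : ℕ := l.countP (fun p => p.1 == 1)

lemma bcount_append (l₁ l₂ : List L2) : bcount (l₁ ++ l₂) = bcount l₁ + bcount l₂ :=
  List.countP_append

lemma bcount_cons (p : L2) (l : List L2) :
    bcount (p :: l) = bcount [p] + bcount l := by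
  simp only [bcount, List.countP_cons, List.countP_nil]
  rw [Nat.zero_add]
  exact Nat.add_comm _ _

def mu (w : FreeGroup (Fin 2)) : ℕ := bcount (core w.toWord)

lemma isConj_core : ∀ l : List L2, IsConj (FreeGroup.mk l) (FreeGroup.mk (core l))
  | [] => by rw [core_nil]
  | p :: t => by
    by_cases h : t.getLast? = some (Invl p)
    · rw [core_peel h]
      have hd : t.dropLast ++ [Invl p] = t := List.dropLast_append_getLast? _ h
      have hmk : FreeGroup.mk (p :: t) =
          FreeGroup.mk [p] * FreeGroup.mk t.dropLast * (FreeGroup.mk [p])⁻¹ := by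
        rw [invl_singleton, FreeGroup.mul_mk, FreeGroup.mul_mk]
        rw [show [p] ++ t.dropLast ++ [Invl p] = p :: (t.dropLast ++ [Invl p]) by simp, hd]
      have h1 : IsConj (FreeGroup.mk t.dropLast)
          (FreeGroup.mk [p] * FreeGroup.mk t.dropLast * (FreeGroup.mk [p])⁻¹) :=
        isConj_iff.mpr ⟨FreeGroup.mk [p], rfl⟩
      rw [hmk]
      exact h1.symm.trans (isConj_core t.dropLast)
    · rw [core_stay h]
termination_by l => l.length
decreasing_by
  simp only [List.length_cons, List.length_dropLast]; omega

lemma isConj_mk_core (w : FreeGroup (Fin 2)) :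
    IsConj w (FreeGroup.mk (core w.toWord)) := by
  conv_lhs => rw [← FreeGroup.mk_toWord (x := w)]
  exact isConj_core w.toWord


lemma conj_formula (ξ : L2) (l : List L2) :
    FreeGroup.mk [ξ] * FreeGroup.mk l * (FreeGroup.mk [ξ])⁻¹ =
      FreeGroup.mk (ξ :: (l ++ [Invl ξ])) := by
  rw [invl_singleton, FreeGroup.mul_mk, FreeGroup.mul_mk]
  rfl

lemma mu_conj_letter (ξ : L2) (w : FreeGroup (Fin 2)) :
    mu (FreeGroup.mk [ξ] * w * (FreeGroup.mk [ξ])⁻¹) = mu w := by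
  rcases eq_or_ne w 1 with rfl | hw1
  · rw [mul_one, mul_inv_cancel]
  have hred : Red w.toWord := red_toWord w
  have hmkl : FreeGroup.mk w.toWord = w := FreeGroup.mk_toWord
  have hlne : w.toWord ≠ [] := fun h => hw1 (FreeGroup.toWord_eq_nil_iff.mp h)
  by_cases hF : w.toWord.head? = some (Invl ξ)
  · obtain ⟨t, hlt⟩ : ∃ t, w.toWord = Invl ξ :: t := by
      cases hk : w.toWord with
      | nil => exact absurd hk hlne
      | cons p t =>
        rw [hk, List.head?_cons, Option.some_inj] at hF
        exact ⟨t, by rw [hF]⟩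
    have hredt : Red t := by
      have := hred; rw [hlt] at this; exact this.tail
    by_cases hB : w.toWord.getLast? = some ξ
    · -- F ∧ B
      have htne : t ≠ [] := by
        rintro rfl
        rw [hlt, List.getLast?_singleton, Option.some_inj] at hB
        exact Invl_ne ξ hB
      have hgt : t.getLast? = some ξ := by
        rw [hlt, getLast?_cons_ne htne] at hB; exact hB
      have hd : t.dropLast ++ [ξ] = t := List.dropLast_append_getLast? _ hgt
      have hwm : w = (FreeGroup.mk [ξ])⁻¹ * FreeGroup.mk t.dropLast * FreeGroup.mk [ξ] := by
        rw [invl_singleton, FreeGroup.mul_mk, FreeGroup.mul_mk, ← hmkl, hlt]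
        rw [show [Invl ξ] ++ t.dropLast ++ [ξ] = Invl ξ :: (t.dropLast ++ [ξ]) by simp, hd]
      have hx : FreeGroup.mk [ξ] * w * (FreeGroup.mk [ξ])⁻¹ = FreeGroup.mk t.dropLast := by
        rw [hwm]; group
      have hrdl : Red t.dropLast := red_dropLast hredt
      show bcount (core (FreeGroup.mk [ξ] * w * (FreeGroup.mk [ξ])⁻¹).toWord)
          = bcount (core w.toWord)
      rw [hx, toWord_mk_red hrdl, hlt, core_peel (by rw [Invl_Invl]; exact hgt)]
    · -- F ∧ ¬B
      have hgtne : t.getLast? ≠ some ξ := by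
        intro hq
        have htne : t ≠ [] := by rintro rfl; simp at hq
        rw [hlt, getLast?_cons_ne htne] at hB
        exact hB hq
      have hchain : Red (t ++ [Invl ξ]) := by
        refine List.isChain_append.mpr ⟨hredt, List.isChain_singleton _, ?_⟩
        intro q hq y hy
        rw [List.head?_cons, Option.mem_def, Option.some_inj] at hy
        subst hy
        intro he
        exact hgtne (by rw [Option.mem_def] at hq; rw [hq, Invl_inj he])
      have h1 : FreeGroup.mk (Invl ξ :: t) = (FreeGroup.mk [ξ])⁻¹ * FreeGroup.mk t := by
        rw [invl_singleton, FreeGroup.mul_mk]; rfl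
      have hx : FreeGroup.mk [ξ] * w * (FreeGroup.mk [ξ])⁻¹
          = FreeGroup.mk (t ++ [Invl ξ]) := by
        calc FreeGroup.mk [ξ] * w * (FreeGroup.mk [ξ])⁻¹
            = FreeGroup.mk [ξ] * ((FreeGroup.mk [ξ])⁻¹ * FreeGroup.mk t)
              * (FreeGroup.mk [ξ])⁻¹ := by rw [← hmkl, hlt, h1]
          _ = FreeGroup.mk t * (FreeGroup.mk [ξ])⁻¹ := by group
          _ = FreeGroup.mk (t ++ [Invl ξ]) := by rw [invl_singleton, FreeGroup.mul_mk]
      have hcyc1 : core (t ++ [Invl ξ]) = t ++ [Invl ξ] := by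
        apply core_of_cycRed
        refine ⟨hchain, ?_⟩
        intro p q hh hg
        rw [List.getLast?_concat, Option.some_inj] at hg
        subst hg
        cases t with
        | nil =>
          simp only [List.nil_append, List.head?_cons, Option.some_inj] at hh
          subst hh
          exact fun he => Invl_ne _ (Invl_inj he).symm
        | cons pp t' =>
          rw [List.head?_append_of_ne_nil _ (by simp), List.head?_cons,
            Option.some_inj] at hh
          subst hh
          have hp' : pp ≠ ξ := by
            have hx2 := hred; rw [hlt] at hx2
            have h2 := (List.isChain_cons_cons.mp hx2).1
            rw [Invl_Invl] at h2; exact h2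
          exact fun he => hp' (Invl_inj he).symm
      have hcyc2 : core (Invl ξ :: t) = Invl ξ :: t := by
        apply core_stay
        rw [Invl_Invl]
        exact hgtne
      show bcount (core (FreeGroup.mk [ξ] * w * (FreeGroup.mk [ξ])⁻¹).toWord)
          = bcount (core w.toWord)
      rw [hx, toWord_mk_red hchain, hlt, hcyc1, hcyc2, bcount_append,
        bcount_cons]
      simp only [bcount, List.countP_nil, List.countP_cons]
      omega
  · by_cases hB : w.toWord.getLast? = some ξ
    · -- ¬F ∧ B
      have hd : w.toWord.dropLast ++ [ξ] = w.toWord :=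
        List.dropLast_append_getLast? _ hB
      have hdred : Red w.toWord.dropLast := red_dropLast hred
      have h1 : w = FreeGroup.mk w.toWord.dropLast * FreeGroup.mk [ξ] := by
        rw [FreeGroup.mul_mk, hd, hmkl]
      have hx : FreeGroup.mk [ξ] * w * (FreeGroup.mk [ξ])⁻¹
          = FreeGroup.mk (ξ :: w.toWord.dropLast) := by
        calc FreeGroup.mk [ξ] * w * (FreeGroup.mk [ξ])⁻¹
            = FreeGroup.mk [ξ] * (FreeGroup.mk w.toWord.dropLast * FreeGroup.mk [ξ])
              * (FreeGroup.mk [ξ])⁻¹ := by rw [← h1]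
          _ = FreeGroup.mk [ξ] * FreeGroup.mk w.toWord.dropLast := by group
          _ = FreeGroup.mk (ξ :: w.toWord.dropLast) := by rw [FreeGroup.mul_mk]; rfl
      have hchain : Red (ξ :: w.toWord.dropLast) := by
        refine List.isChain_cons.mpr ⟨?_, hdred⟩
        intro y hy
        have hdne : w.toWord.dropLast ≠ [] := by
          intro h0; rw [h0] at hy; simp at hy
        rw [Option.mem_def] at hy
        have : w.toWord.head? = some y := by
          rw [← hd, List.head?_append_of_ne_nil _ hdne, hy]
        intro he
        exact hF (by rw [this, he])
      have hnopeel : w.toWord.dropLast.getLast? ≠ some (Invl ξ) := by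
        intro hq
        have hd2 : w.toWord.dropLast.dropLast ++ [Invl ξ] = w.toWord.dropLast :=
          List.dropLast_append_getLast? _ hq
        have hinf : [Invl ξ, ξ] <:+: w.toWord := by
          refine ⟨w.toWord.dropLast.dropLast, [], ?_⟩
          rw [← hd, ← hd2]
          simp
        have := (hred.infix hinf)
        have h2 := List.isChain_pair.mp this
        rw [Invl_Invl] at h2
        exact h2 rfl
      have hcyc1 : core (ξ :: w.toWord.dropLast) = ξ :: w.toWord.dropLast :=
        core_stay hnopeel
      have hcyc2 : core w.toWord = w.toWord := by
        apply core_of_cycRed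
        refine ⟨hred, ?_⟩
        intro p q hh hg
        rw [hB, Option.some_inj] at hg
        subst hg
        intro he
        apply hF
        rw [hh]
        congr 1
        rw [he, Invl_Invl]
      show bcount (core (FreeGroup.mk [ξ] * w * (FreeGroup.mk [ξ])⁻¹).toWord)
          = bcount (core w.toWord)
      rw [hx, toWord_mk_red hchain, hcyc1, hcyc2, ← hd, bcount_append, bcount_cons]
      simp [Nat.add_comm]
    · -- ¬F ∧ ¬B
      have hjunc : Red (w.toWord ++ [Invl ξ]) := by
        refine List.isChain_append.mpr ⟨hred, List.isChain_singleton _, ?_⟩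
        intro q hq y hy
        rw [List.head?_cons, Option.mem_def, Option.some_inj] at hy
        subst hy
        intro he
        exact hB (by rw [Option.mem_def] at hq; rw [hq, Invl_inj he])
      have hchain : Red (ξ :: (w.toWord ++ [Invl ξ])) := by
        refine List.isChain_cons.mpr ⟨?_, hjunc⟩
        intro y hy
        rw [List.head?_append_of_ne_nil _ hlne, Option.mem_def] at hy
        intro he
        exact hF (by rw [hy, he])
      have hx := conj_formula ξ w.toWord
      rw [hmkl] at hx
      show bcount (core (FreeGroup.mk [ξ] * w * (FreeGroup.mk [ξ])⁻¹).toWord)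
          = bcount (core w.toWord)
      rw [hx, toWord_mk_red hchain,
        core_peel (by rw [List.getLast?_concat]), List.dropLast_concat]

lemma mu_conj (g w : FreeGroup (Fin 2)) : mu (g * w * g⁻¹) = mu w := by
  induction g using FreeGroup.induction_on generalizing w with
  | C1 => simp
  | of x =>
    rw [show (FreeGroup.of x : FreeGroup (Fin 2)) = FreeGroup.mk [(x, true)] from rfl]
    exact mu_conj_letter _ w
  | inv_of x ih =>
    have e : (FreeGroup.of x : FreeGroup (Fin 2)) * ((FreeGroup.of x : FreeGroup (Fin 2))⁻¹ * w
        * (FreeGroup.of x : FreeGroup (Fin 2))) * (FreeGroup.of x : FreeGroup (Fin 2))⁻¹ = w := by group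
    have h2 := ih ((FreeGroup.of x : FreeGroup (Fin 2))⁻¹ * w * (FreeGroup.of x : FreeGroup (Fin 2)))
    rw [e] at h2
    rw [inv_inv]
    exact h2.symm
  | mul x y ihx ihy =>
    have e : x * y * w * (x * y)⁻¹ = x * (y * w * y⁻¹) * x⁻¹ := by group
    rw [e, ihx, ihy]

lemma mu_isConj {x y : FreeGroup (Fin 2)} (h : IsConj x y) : mu x = mu y := by
  obtain ⟨c, hc⟩ := isConj_iff.mp h
  rw [← hc, mu_conj]



-- block machinery
def aL (ε : Bool) : L2 := ((0 : Fin 2), ε)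
def bL (s : Bool) : L2 := ((1 : Fin 2), s)

def bword (m : ℤ) : List L2 := List.replicate m.natAbs (bL (decide (0 < m)))

def blockWord (Lb : List (Bool × ℤ)) : List L2 :=
  Lb.flatMap (fun p => aL p.1 :: bword p.2)

def enc : List (Bool × ℤ) → FreeGroup (Fin 2)
  | [] => 1
  | (ε, m) :: t =>
      (if ε then FreeGroup.of 0 else (FreeGroup.of 0)⁻¹) * FreeGroup.of 1 ^ m * enc t

lemma enc_cons (ε m t) : enc ((ε, m) :: t) =
    (if ε then FreeGroup.of 0 else (FreeGroup.of 0)⁻¹) * FreeGroup.of 1 ^ m * enc t := rfl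

lemma enc_append : ∀ L₁ L₂, enc (L₁ ++ L₂) = enc L₁ * enc L₂
  | [], L₂ => by simp [enc]
  | (ε, m) :: t, L₂ => by
    simp only [List.cons_append, enc_cons, enc_append t L₂, mul_assoc]

lemma mk_replicate_true (i : Fin 2) (n : ℕ) :
    FreeGroup.mk (List.replicate n (i, true)) = FreeGroup.of i ^ n := by
  have := FreeGroup.toWord_of_pow i n
  have h2 := congrArg FreeGroup.mk this
  rw [FreeGroup.mk_toWord] at h2
  exact h2.symm

lemma mk_replicate_false (i : Fin 2) (n : ℕ) :
    FreeGroup.mk (List.replicate n (i, false)) = (FreeGroup.of i ^ n)⁻¹ := by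
  have h1 : FreeGroup.invRev (List.replicate n (i, true)) = List.replicate n (i, false) := by
    simp [FreeGroup.invRev, List.map_replicate]
  rw [← mk_replicate_true, FreeGroup.inv_mk, h1]

lemma mk_bword (m : ℤ) : FreeGroup.mk (bword m) = FreeGroup.of 1 ^ m := by
  rcases lt_trichotomy m 0 with hm | rfl | hm
  · have hd : decide (0 < m) = false := by simp [not_lt.mpr hm.le]
    rw [bword, hd]
    simp only [bL]
    rw [mk_replicate_false]
    rw [← zpow_natCast, ← zpow_neg]
    congr 1
    omega
  · simp [bword, enc]
    rfl
  · have hd : decide (0 < m) = true := by simpa using hm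
    rw [bword, hd]
    simp only [bL]
    rw [mk_replicate_true, ← zpow_natCast]
    congr 1
    omega

lemma mk_aL (ε : Bool) : FreeGroup.mk [aL ε] =
    (if ε then FreeGroup.of 0 else (FreeGroup.of 0)⁻¹) := by
  cases ε
  · have : aL false = Invl ((0 : Fin 2), true) := rfl
    rw [this, ← invl_singleton]
    rfl
  · rfl

lemma mk_blockWord : ∀ Lb, FreeGroup.mk (blockWord Lb) = enc Lb
  | [] => rfl
  | (ε, m) :: t => by
    have : blockWord ((ε, m) :: t) = ([aL ε] ++ bword m) ++ blockWord t := by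
      simp [blockWord]
    rw [this, ← FreeGroup.mul_mk, ← FreeGroup.mul_mk, mk_aL, mk_bword,
      mk_blockWord t, enc_cons]




def Q (p q : Bool × ℤ) : Prop := p.2 = 0 → q.1 = p.1

lemma ne_invl_of_fst {p q : L2} (h : p.1 ≠ q.1) : p ≠ Invl q := by
  intro he; apply h; rw [he]; rfl

lemma bword_mem {m : ℤ} {x : L2} (hx : x ∈ bword m) : x = bL (decide (0 < m)) :=
  List.eq_of_mem_replicate hx

lemma bword_chain (m : ℤ) : List.Chain' (fun p q => q ≠ Invl p) (bword m) := by
  unfold bword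
  generalize m.natAbs = n
  induction n with
  | zero => exact List.isChain_nil
  | succ n ih =>
    rw [List.replicate_succ]
    refine List.isChain_cons.mpr ⟨?_, ih⟩
    intro y hy
    rw [List.head?_replicate] at hy
    by_cases hn : n = 0
    · rw [if_pos hn] at hy; simp at hy
    · rw [if_neg hn, Option.mem_def, Option.some_inj] at hy
      subst hy
      intro he
      exact Invl_ne _ he.symm

lemma blockWord_cons (ε m t) :
    blockWord ((ε, m) :: t) = aL ε :: (bword m ++ blockWord t) := by
  simp [blockWord]

lemma blockWord_head (ε m t) : (blockWord ((ε, m) :: t)).head? = some (aL ε) := by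
  rw [blockWord_cons]; rfl

lemma blockWord_ne_nil (ε m t) : blockWord ((ε, m) :: t) ≠ [] := by
  rw [blockWord_cons]; simp

lemma bword_eq_nil_iff {m : ℤ} : bword m = [] ↔ m = 0 := by
  unfold bword
  rw [List.replicate_eq_nil_iff]
  omega

lemma blockWord_getLast : ∀ (Lb : List (Bool × ℤ)) (p), Lb.getLast? = some p →
    (blockWord Lb).getLast? =
      some (if p.2 = 0 then aL p.1 else bL (decide (0 < p.2)))
  | [], p => by simp
  | [(ε, m)], p => by
    intro hp
    rw [List.getLast?_singleton, Option.some_inj] at hp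
    subst hp
    rw [blockWord_cons]
    by_cases hm : m = 0
    · have hb : bword m = [] := bword_eq_nil_iff.mpr hm
      rw [hb]
      simp [blockWord, hm]
    · have hne : bword m ≠ [] := fun h => hm (bword_eq_nil_iff.mp h)
      rw [show blockWord ([] : List (Bool × ℤ)) = [] from rfl, List.append_nil]
      rw [getLast?_cons_ne hne]
      unfold bword
      rw [List.getLast?_replicate]
      have : m.natAbs ≠ 0 := fun h => hm (by omega)
      simp [this, hm]
  | (ε, m) :: (ε', m') :: t, p => by
    intro hp
    rw [List.getLast?_cons_cons] at hp
    have ih := blockWord_getLast ((ε', m') :: t) p hp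
    rw [blockWord_cons]
    have hne := blockWord_ne_nil ε' m' t
    rw [getLast?_cons_ne (by simp [hne]), List.getLast?_append_of_ne_nil _ hne]
    exact ih

lemma red_blockWord : ∀ (Lb : List (Bool × ℤ)), List.Chain' Q Lb → Red (blockWord Lb)
  | [] => fun _ => List.isChain_nil
  | (ε, m) :: t => fun h => by
    rw [blockWord_cons]
    refine List.isChain_cons.mpr ⟨?_, ?_⟩
    · intro y hy
      rcases hbe : bword m with _ | ⟨q, run⟩
      · -- m = 0
        have hm : m = 0 := bword_eq_nil_iff.mp hbe
        rw [hbe, List.nil_append] at hy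
        cases t with
        | nil => simp [blockWord] at hy
        | cons x t' =>
          obtain ⟨ε', m'⟩ := x
          rw [blockWord_head, Option.mem_def, Option.some_inj] at hy
          subst hy
          have hq : ε' = ε := (List.isChain_cons_cons.mp h).1 hm
          rw [hq]
          exact (Invl_ne _).symm
      · rw [hbe] at hy
        rw [List.cons_append, List.head?_cons, Option.mem_def, Option.some_inj] at hy
        subst hy
        have : q = bL (decide (0 < m)) := bword_mem (by rw [hbe]; simp)
        subst this
        apply ne_invl_of_fst
        simp [bL, aL]
    · refine List.isChain_append.mpr ⟨bword_chain m, red_blockWord t h.tail, ?_⟩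
      intro x hx y hy
      have hxb : x = bL (decide (0 < m)) :=
        bword_mem (List.mem_of_mem_getLast? hx)
      cases t with
      | nil => simp [blockWord] at hy
      | cons z t' =>
        obtain ⟨ε', m'⟩ := z
        rw [blockWord_head, Option.mem_def, Option.some_inj] at hy
        subst hy
        apply ne_invl_of_fst
        rw [hxb]
        simp [bL, aL]

lemma cycRed_blockWord {Lb : List (Bool × ℤ)} (h1 : List.Chain' Q Lb)
    (h2 : ∀ p q, Lb.getLast? = some p → Lb.head? = some q → Q p q) :
    CycRed (blockWord Lb) := by
  refine ⟨red_blockWord Lb h1, ?_⟩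
  intro p q hh hg
  cases Lb with
  | nil => simp [blockWord] at hh
  | cons x t =>
    obtain ⟨ε, m⟩ := x
    rw [blockWord_head, Option.some_inj] at hh
    subst hh
    obtain ⟨pl, hpl⟩ : ∃ pl, ((ε, m) :: t).getLast? = some pl := by
      cases hgg : ((ε, m) :: t).getLast? with
      | none => simp at hgg
      | some z => exact ⟨z, rfl⟩
    have hbl := blockWord_getLast _ _ hpl
    rw [hg, Option.some_inj] at hbl
    subst hbl
    by_cases hm : pl.2 = 0
    · rw [if_pos hm]
      have hthis : ε = pl.1 := h2 pl (ε, m) hpl rfl hm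
      rw [← hthis]
      exact (Invl_ne _).symm
    · rw [if_neg hm]
      apply ne_invl_of_fst
      simp [bL, aL, Invl]

def bsum (Lb : List (Bool × ℤ)) : ℕ := (Lb.map (fun p => p.2.natAbs)).sum

lemma bcount_blockWord : ∀ Lb : List (Bool × ℤ), bcount (blockWord Lb) = bsum Lb
  | [] => rfl
  | (ε, m) :: t => by
    rw [blockWord_cons]
    show bcount ([aL ε] ++ (bword m ++ blockWord t)) = _
    rw [bcount_append, bcount_append, bcount_blockWord t]
    have h1 : bcount [aL ε] = 0 := by simp [bcount, aL]
    have h2 : bcount (bword m) = m.natAbs := by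
      unfold bcount bword
      rw [List.countP_replicate]
      simp [bL]
    rw [h1, h2]
    simp [bsum]

lemma aL_fst_ne : ¬ ((0 : Fin 2) = (1 : Fin 2)) := by decide

lemma mu_enc {Lb : List (Bool × ℤ)} (h1 : List.Chain' Q Lb)
    (h2 : ∀ p q, Lb.getLast? = some p → Lb.head? = some q → Q p q) :
    mu (enc Lb) = bsum Lb := by
  have hred : Red (blockWord Lb) := red_blockWord Lb h1
  show bcount (core (enc Lb).toWord) = _
  rw [← mk_blockWord, toWord_mk_red hred, core_of_cycRed (cycRed_blockWord h1 h2),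
    bcount_blockWord]




lemma fin2_cases (i : Fin 2) : i = 0 ∨ i = 1 := by omega

lemma bool_ne {x y : Bool} (h : ¬ x = y) : x = !y := by
  cases x <;> cases y <;> simp_all

lemma ne_Invl_symm {p q : L2} (h : q ≠ Invl p) : p ≠ Invl q := by
  intro he; apply h; rw [he, Invl_Invl]

lemma aux_run : ∀ run : List L2, List.Chain' (fun p q => q ≠ Invl p) run →
    (∀ x ∈ run, x.1 = (1 : Fin 2)) →
    ∃ s : Bool, run = List.replicate run.length (bL s)
  | [] => fun _ _ => ⟨true, rfl⟩
  | q :: run' => fun hch hmem => by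
    have hq : q = bL q.2 := by
      have h1 : q.1 = 1 := hmem q (by simp)
      rw [bL, ← h1]
    obtain ⟨s', hs'⟩ := aux_run run' hch.tail (fun x hx => hmem x (by simp [hx]))
    have hss : run' = [] ∨ s' = q.2 := by
      cases hr : run' with
      | nil => exact Or.inl rfl
      | cons x run'' =>
        right
        have hx : x = bL s' := by
          have hh : run'.head? = some (bL s') := by
            rw [hs', List.head?_replicate]
            have : run'.length ≠ 0 := by rw [hr]; simp
            simp [this]
          rw [hr, List.head?_cons, Option.some_inj] at hh
          exact hh
        have hxq : x ≠ Invl q := by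
          have hc := List.isChain_cons.mp hch |>.1
          apply hc
          rw [hr]; rfl
        by_contra hne
        apply hxq
        rw [hx, hq]
        show bL s' = Invl (bL q.2)
        rw [show Invl (bL q.2) = ((1 : Fin 2), !q.2) from rfl, bL, bool_ne hne]
    have htail : run' = List.replicate run'.length (bL q.2) := by
      rcases hss with hnil | hss
      · rw [hnil]; simp
      · rw [← hss]; exact hs'
    refine ⟨q.2, ?_⟩
    show q :: run' = List.replicate (run'.length + 1) (bL q.2)
    rw [List.replicate_succ]
    conv_lhs => rw [hq, htail]

lemma bword_of_rep (n : ℕ) (s : Bool) :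
    bword (if s then (n : ℤ) else -(n : ℤ)) = List.replicate n (bL s) := by
  cases s
  · show bword (-(n : ℤ)) = _
    unfold bword
    cases n with
    | zero => simp
    | succ n =>
      have h2 : (-((n + 1 : ℕ) : ℤ)).natAbs = n + 1 := by omega
      have h3 : decide (0 < -((n + 1 : ℕ) : ℤ)) = false := by
        simp only [decide_eq_false_iff_not]
        omega
      rw [h2, h3]
  · show bword ((n : ℤ)) = _
    unfold bword
    cases n with
    | zero => simp
    | succ n =>
      have h2 : (((n + 1 : ℕ)) : ℤ).natAbs = n + 1 := by omega
      have h3 : decide (0 < ((n + 1 : ℕ) : ℤ)) = true := by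
        simp only [decide_eq_true_eq]
        omega
      rw [h2, h3]

lemma dropWhile_head_fst {l : List L2} {q : L2}
    (hq : (l.dropWhile (fun x => x.1 == 1)).head? = some q) : q.1 = (0 : Fin 2) := by
  cases hre : l.dropWhile (fun x => x.1 == 1) with
  | nil => rw [hre] at hq; simp at hq
  | cons y ys =>
    rw [hre, List.head?_cons, Option.some_inj] at hq
    subst hq
    have hw : l.dropWhile (fun x : L2 => x.1 == 1) ≠ [] := by rw [hre]; simp
    have hnot := List.head_dropWhile_not (fun x : L2 => x.1 == 1) hw
    set yh := (l.dropWhile (fun x : L2 => x.1 == 1)).head hw with hyh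
    have h2 : (l.dropWhile (fun x : L2 => x.1 == 1)).head? = some yh :=
      List.head?_eq_head hw
    rw [hre, List.head?_cons, Option.some_inj] at h2
    rw [← h2] at hnot
    rcases fin2_cases y.1 with h | h
    · exact h
    · rw [h] at hnot; simp at hnot

lemma parse_ex : ∀ (n : ℕ) (l : List L2), l.length ≤ n → Red l →
    (∀ p, l.head? = some p → p.1 = (0 : Fin 2)) →
    ∃ Lb : List (Bool × ℤ), blockWord Lb = l ∧ List.Chain' Q Lb := by
  intro n
  induction n with
  | zero =>
    intro l hl _ _
    have : l = [] := List.length_eq_zero_iff.mp (Nat.le_zero.mp hl)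
    exact ⟨[], by simp [this, blockWord], List.isChain_nil⟩
  | succ n ih =>
    intro l hl hred hhead
    cases l with
    | nil => exact ⟨[], by simp [blockWord], List.isChain_nil⟩
    | cons p t =>
      have hp : p.1 = 0 := hhead p rfl
      have hsplit : t.takeWhile (fun q : L2 => q.1 == 1) ++ t.dropWhile (fun q : L2 => q.1 == 1) = t :=
        List.takeWhile_append_dropWhile
      set run := t.takeWhile (fun q : L2 => q.1 == 1) with hrun
      set rest := t.dropWhile (fun q : L2 => q.1 == 1) with hrest
      have hredt : Red t := hred.tail
      have hrunmem : ∀ x ∈ run, x.1 = (1 : Fin 2) := by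
        intro x hx
        have := List.mem_takeWhile_imp hx
        simpa using this
      have hrunchain : List.Chain' (fun p q => q ≠ Invl p) run :=
        hredt.prefix (List.takeWhile_prefix _)
      obtain ⟨s, hrep⟩ := aux_run run hrunchain hrunmem
      have hbw : bword (if s then (run.length : ℤ) else -(run.length : ℤ)) = run := by
        rw [bword_of_rep]; exact hrep.symm
      have hrestred : Red rest := hredt.suffix (List.dropWhile_suffix _)
      have hresthead : ∀ q, rest.head? = some q → q.1 = (0 : Fin 2) := by
        intro q hq
        exact dropWhile_head_fst (by rw [← hrest]; exact hq)
      have hlen : rest.length ≤ n := by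
        have h1 : rest.length ≤ t.length := (List.dropWhile_suffix _).length_le
        have h2 : t.length ≤ n := by
          simp only [List.length_cons] at hl; omega
        omega
      obtain ⟨Lb', hLb'w, hLb'c⟩ := ih rest hlen hrestred hresthead
      refine ⟨(p.2, if s then (run.length : ℤ) else -(run.length : ℤ)) :: Lb', ?_, ?_⟩
      · rw [blockWord_cons, hbw, hLb'w, hsplit]
        congr 1
        rw [aL, ← hp]
      · refine List.isChain_cons.mpr ⟨?_, hLb'c⟩
        intro y hy
        intro hm0
        have hrl : run.length = 0 := by
          have hm0' : (if s = true then (run.length : ℤ) else -(run.length : ℤ)) = 0 := hm0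
          cases s
          · simp only [Bool.false_eq_true, if_false] at hm0'; omega
          · simp only [if_true] at hm0'; omega
        have hrnil : run = [] := List.length_eq_zero_iff.mp hrl
        have hrt : rest = t := by rw [← hsplit, hrnil, List.nil_append]
        cases hLb : Lb' with
        | nil => rw [hLb] at hy; simp at hy
        | cons y' Lb'' =>
          obtain ⟨ε', m'⟩ := y'
          rw [hLb, List.head?_cons, Option.mem_def, Option.some_inj] at hy
          subst hy
          have hbh : (blockWord ((ε', m') :: Lb'')).head? = some (aL ε') :=
            blockWord_head _ _ _
          rw [← hLb, hLb'w, hrt] at hbh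
          have hchain := List.isChain_cons.mp hred |>.1
          have hne2 := hchain (aL ε') hbh
          show ε' = p.2
          by_contra hne
          apply hne2
          show aL ε' = Invl p
          rw [show Invl p = (p.1, !p.2) from rfl, hp, aL, bool_ne hne]

lemma rotate_ex {l : List L2} (hcyc : CycRed l) (hex : ∃ p ∈ l, p.1 = (0 : Fin 2)) :
    ∃ l₁ : List L2, CycRed l₁ ∧ IsConj (FreeGroup.mk l) (FreeGroup.mk l₁) ∧
      bcount l₁ = bcount l ∧ (∀ p, l₁.head? = some p → p.1 = (0 : Fin 2)) := by
  obtain ⟨p0, hp0mem, hp00⟩ := hex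
  have hsplit : l.takeWhile (fun q : L2 => q.1 == 1) ++ l.dropWhile (fun q : L2 => q.1 == 1) = l :=
    List.takeWhile_append_dropWhile
  set tk := l.takeWhile (fun q : L2 => q.1 == 1) with htk
  set dr := l.dropWhile (fun q : L2 => q.1 == 1) with hdr
  have hdrne : dr ≠ [] := by
    intro h
    have hall : ∀ x ∈ l, (fun q : L2 => q.1 == 1) x := List.dropWhile_eq_nil_iff.mp h
    have h2 : (p0.1 == 1) = true := hall p0 hp0mem
    rw [hp00] at h2
    simp at h2
  have hdrhead : ∀ p, dr.head? = some p → p.1 = (0 : Fin 2) := by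
    intro q hq
    exact dropWhile_head_fst (by rw [← hdr]; exact hq)
  have hreddr : Red dr := hcyc.1.suffix (by rw [← hsplit]; exact ⟨tk, rfl⟩)
  have hredtk : Red tk := hcyc.1.prefix (by rw [← hsplit]; exact ⟨dr, rfl⟩)
  have hlast : l.getLast? = dr.getLast? := by
    rw [← hsplit, List.getLast?_append_of_ne_nil _ hdrne]
  refine ⟨dr ++ tk, ⟨?_, ?_⟩, ?_, ?_, ?_⟩
  · refine List.isChain_append.mpr ⟨hreddr, hredtk, ?_⟩
    intro x hx y hy
    have hyl : l.head? = some y := by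
      rw [← hsplit, List.head?_append_of_ne_nil _ (by
        intro h0; rw [h0] at hy; simp at hy)]
      exact hy
    have hxl : l.getLast? = some x := by rw [hlast]; exact hx
    exact ne_Invl_symm (hcyc.2 y x hyl hxl)
  · intro p q hh hg
    have hph : dr.head? = some p := by
      rwa [List.head?_append_of_ne_nil _ hdrne] at hh
    have hp0' : p.1 = 0 := hdrhead p hph
    cases htknil : tk with
    | nil =>
      rw [htknil, List.append_nil] at hg
      have hl1 : l = dr := by rw [← hsplit, htknil, List.nil_append]
      apply hcyc.2 p q
      · rw [hl1]; exact hph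
      · rw [hl1]; exact hg
    | cons z tk' =>
      have hq1 : q.1 = 1 := by
        have hqtk : q ∈ tk := by
          apply List.mem_of_mem_getLast?
          rw [List.getLast?_append_of_ne_nil _ (by rw [htknil]; simp)] at hg
          rw [Option.mem_def]
          exact hg
        have := List.mem_takeWhile_imp hqtk
        simpa using this
      apply ne_invl_of_fst
      rw [hq1]
      show (1 : Fin 2) ≠ (Invl p).1
      have h3 : (Invl p).1 = p.1 := rfl
      rw [h3, hp0']
      decide
  · have h1 : FreeGroup.mk l = FreeGroup.mk tk * FreeGroup.mk dr := by
      rw [FreeGroup.mul_mk, hsplit]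
    have h2 : FreeGroup.mk (dr ++ tk) = FreeGroup.mk dr * FreeGroup.mk tk := by
      rw [FreeGroup.mul_mk]
    rw [h1, h2]
    exact isConj_iff.mpr ⟨FreeGroup.mk dr, by group⟩
  · conv_rhs => rw [← hsplit]
    rw [bcount_append, bcount_append]
    omega
  · intro p hp
    apply hdrhead
    rwa [List.head?_append_of_ne_nil _ hdrne] at hp

lemma allb_fixed (φ : MulAut (FreeGroup (Fin 2)))
    (hφb : φ (FreeGroup.of 1) = FreeGroup.of 1) :
    ∀ l : List L2, (∀ p ∈ l, p.1 = (1 : Fin 2)) → φ (FreeGroup.mk l) = FreeGroup.mk l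
  | [] => fun _ => by
    rw [show FreeGroup.mk ([] : List L2) = 1 from rfl, map_one]
  | p :: t => fun h => by
    have hsplit : FreeGroup.mk (p :: t) = FreeGroup.mk [p] * FreeGroup.mk t := by
      rw [FreeGroup.mul_mk]; rfl
    have hp : p = ((1 : Fin 2), p.2) := by
      have := h p (by simp)
      rw [Prod.ext_iff]
      exact ⟨this, rfl⟩
    have hone : φ (FreeGroup.mk [p]) = FreeGroup.mk [p] := by
      cases hs : p.2 with
      | true =>
        have he : FreeGroup.mk [p] = FreeGroup.of 1 := by
          rw [hp, hs]; rfl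
        rw [he, hφb]
      | false =>
        have he : FreeGroup.mk [p] = (FreeGroup.of 1)⁻¹ := by
          rw [hp, hs]
          rw [show ((1 : Fin 2), false) = Invl ((1 : Fin 2), true) from rfl, ← invl_singleton]
          rfl
        rw [he, map_inv, hφb]
    rw [hsplit, map_mul, hone, allb_fixed φ hφb t (fun q hq => h q (by simp [hq]))]




def chi (NK : ℤ) (ε ε' : Bool) : ℤ := (if ε then NK else 0) - (if ε' then 0 else NK)

lemma chi_same (NK : ℤ) (ε : Bool) : chi NK ε ε = if ε then NK else -NK := by
  cases ε <;> simp [chi]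

lemma chi_mixed {NK : ℤ} {ε ε' : Bool} (h : ε' ≠ ε) : chi NK ε ε' = 0 := by
  cases ε <;> cases ε' <;> simp_all [chi]

def shiftO (NK : ℤ) : List (Bool × ℤ) → List (Bool × ℤ)
  | [] => []
  | [(ε, m)] => [(ε, m + (if ε then NK else 0))]
  | (ε, m) :: (ε', m') :: t => (ε, m + chi NK ε ε') :: shiftO NK ((ε', m') :: t)

def shiftC (NK : ℤ) (e1 : Bool) : List (Bool × ℤ) → List (Bool × ℤ)
  | [] => []
  | [(ε, m)] => [(ε, m + chi NK ε e1)]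
  | (ε, m) :: (ε', m') :: t => (ε, m + chi NK ε ε') :: shiftC NK e1 ((ε', m') :: t)

lemma getLast?_cons_ne' {α : Type*} {p : α} {t : List α} (h : t ≠ []) :
    (p :: t).getLast? = t.getLast? := by
  cases t with
  | nil => exact absurd rfl h
  | cons q t' => exact List.getLast?_cons_cons

def pre (NK : ℤ) : List (Bool × ℤ) → ℤ
  | [] => 0
  | (ε, _) :: _ => if ε then 0 else -NK

@[simp] lemma enc_nil : enc [] = 1 := rfl

lemma psi_enc (ψ : MulAut (FreeGroup (Fin 2))) (NK : ℤ)
    (hψa : ψ (FreeGroup.of 0) = FreeGroup.of 0 * FreeGroup.of 1 ^ NK)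
    (hψb : ψ (FreeGroup.of 1) = FreeGroup.of 1) :
    ∀ Lb : List (Bool × ℤ), ψ (enc Lb) = FreeGroup.of 1 ^ (pre NK Lb) * enc (shiftO NK Lb)
  | [] => by simp [shiftO, pre]
  | [(ε, m)] => by
    have hz : ψ (FreeGroup.of 1 ^ m) = FreeGroup.of 1 ^ m := by
      rw [map_zpow, hψb]
    cases ε
    · show ψ ((FreeGroup.of 0)⁻¹ * FreeGroup.of 1 ^ m * enc []) = _
      rw [enc_nil, mul_one, map_mul, map_inv, hψa, hz]
      show _ = FreeGroup.of 1 ^ (-NK) *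
        ((FreeGroup.of 0)⁻¹ * FreeGroup.of 1 ^ (m + 0) * enc [])
      rw [enc_nil, mul_one]
      group
    · show ψ (FreeGroup.of 0 * FreeGroup.of 1 ^ m * enc []) = _
      rw [enc_nil, mul_one, map_mul, hψa, hz]
      show _ = FreeGroup.of 1 ^ (0 : ℤ) *
        (FreeGroup.of 0 * FreeGroup.of 1 ^ (m + NK) * enc [])
      rw [enc_nil, mul_one]
      group
  | (ε, m) :: (ε', m') :: t => by
    have ih := psi_enc ψ NK hψa hψb ((ε', m') :: t)
    have hz : ψ (FreeGroup.of 1 ^ m) = FreeGroup.of 1 ^ m := by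
      rw [map_zpow, hψb]
    have hstep : ψ (enc ((ε, m) :: (ε', m') :: t)) =
        ψ (if ε then FreeGroup.of 0 else (FreeGroup.of 0)⁻¹) * FreeGroup.of 1 ^ m *
          (FreeGroup.of 1 ^ (pre NK ((ε', m') :: t)) * enc (shiftO NK ((ε', m') :: t))) := by
      rw [enc_cons, map_mul, map_mul, hz, ih]
    rw [hstep]
    show _ = FreeGroup.of 1 ^ (pre NK ((ε, m) :: (ε', m') :: t)) *
      ((if ε then FreeGroup.of 0 else (FreeGroup.of 0)⁻¹) *
        FreeGroup.of 1 ^ (m + chi NK ε ε') * enc (shiftO NK ((ε', m') :: t)))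
    cases ε
    · rw [if_neg (show ¬ (false = true) by decide),
        map_inv, hψa, show pre NK ((false, m) :: (ε', m') :: t) = -NK from rfl]
      cases ε'
      · rw [show pre NK ((false, m') :: t) = -NK from rfl,
          show chi NK false false = -NK by simp [chi_same]]
        group
      · rw [show pre NK ((true, m') :: t) = 0 from rfl,
          show chi NK false true = 0 from chi_mixed (by decide)]
        group
    · rw [if_pos (show (true = true) from rfl), hψa, show pre NK ((true, m) :: (ε', m') :: t) = 0 from rfl]
      cases ε'
      · rw [show pre NK ((false, m') :: t) = -NK from rfl,
          show chi NK true false = NK - NK from rfl]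
        group
      · rw [show pre NK ((true, m') :: t) = 0 from rfl,
          show chi NK true true = NK by simp [chi_same]]
        group

lemma encOC (NK : ℤ) (e1 : Bool) :
    ∀ Lb : List (Bool × ℤ), Lb ≠ [] →
      enc (shiftO NK Lb) = enc (shiftC NK e1 Lb) * FreeGroup.of 1 ^ (if e1 then 0 else NK)
  | [], h => absurd rfl h
  | [(ε, m)], _ => by
    show enc [(ε, m + (if ε then NK else 0))] =
      enc [(ε, m + chi NK ε e1)] * FreeGroup.of 1 ^ (if e1 then 0 else NK)
    have hexp : m + (if ε then NK else 0) =
        (m + chi NK ε e1) + (if e1 then 0 else NK) := by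
      unfold chi; ring
    rw [enc_cons, enc_cons, enc_nil, mul_one, mul_one, hexp, zpow_add]
    group
  | (ε, m) :: (ε', m') :: t, _ => by
    have ih := encOC NK e1 ((ε', m') :: t) (by simp)
    show enc ((ε, m + chi NK ε ε') :: shiftO NK ((ε', m') :: t)) =
      enc ((ε, m + chi NK ε ε') :: shiftC NK e1 ((ε', m') :: t)) * _
    rw [enc_cons, enc_cons, ih]
    group

lemma shiftC_head (NK : ℤ) (e1 : Bool) :
    ∀ (Lb : List (Bool × ℤ)) (x : Bool × ℤ), Lb.head? = some x →
      ∃ mm, (shiftC NK e1 Lb).head? = some (x.1, mm)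
  | [], x => by simp
  | [(ε, m)], x => fun hx => by
    rw [List.head?_cons, Option.some_inj] at hx
    subst hx
    exact ⟨m + chi NK ε e1, rfl⟩
  | (ε, m) :: (ε', m') :: t, x => fun hx => by
    rw [List.head?_cons, Option.some_inj] at hx
    subst hx
    exact ⟨m + chi NK ε ε', rfl⟩

lemma shiftC_getLast (NK : ℤ) (e1 : Bool) :
    ∀ (Lb : List (Bool × ℤ)) (ε : Bool) (m : ℤ), Lb.getLast? = some (ε, m) →
      (shiftC NK e1 Lb).getLast? = some (ε, m + chi NK ε e1)
  | [], ε, m => by simp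
  | [(ε', m')], ε, m => fun hx => by
    rw [List.getLast?_singleton, Option.some_inj] at hx
    injection hx with h1 h2
    subst h1; subst h2
    rfl
  | (ε1, m1) :: (ε2, m2) :: t, ε, m => fun hx => by
    rw [List.getLast?_cons_cons] at hx
    have ih := shiftC_getLast NK e1 ((ε2, m2) :: t) ε m hx
    show ((ε1, m1 + chi NK ε1 ε2) :: shiftC NK e1 ((ε2, m2) :: t)).getLast? = _
    have hne : shiftC NK e1 ((ε2, m2) :: t) ≠ [] := by
      intro h0
      rw [h0] at ih
      simp at ih
    rw [getLast?_cons_ne' hne]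
    exact ih

lemma shiftC_chain (NK : ℤ) (e1 : Bool) :
    ∀ Lb : List (Bool × ℤ), List.Chain' Q Lb → List.Chain' Q (shiftC NK e1 Lb)
  | [] => fun _ => List.isChain_nil
  | [(ε, m)] => fun _ => List.isChain_singleton _
  | (ε, m) :: (ε', m') :: t => fun h => by
    have ih := shiftC_chain NK e1 ((ε', m') :: t) h.tail
    show List.Chain' Q ((ε, m + chi NK ε ε') :: shiftC NK e1 ((ε', m') :: t))
    refine List.isChain_cons.mpr ⟨?_, ih⟩
    intro y hy
    obtain ⟨mm, hmm⟩ := shiftC_head NK e1 ((ε', m') :: t) (ε', m') rfl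
    rw [Option.mem_def, hmm, Option.some_inj] at hy
    subst hy
    intro h0
    by_cases hee : ε' = ε
    · exact hee
    · exfalso
      rw [chi_mixed hee] at h0
      simp only [add_zero] at h0
      have hq := (List.isChain_cons_cons.mp h).1
      exact hee (hq h0)

def hasSame (e1 : Bool) : List (Bool × ℤ) → Prop
  | [] => False
  | [(ε, _)] => ε = e1
  | (ε, _) :: (ε', m') :: t => ε = ε' ∨ hasSame e1 ((ε', m') :: t)

lemma bsum_cons (ε : Bool) (m : ℤ) (t : List (Bool × ℤ)) :
    bsum ((ε, m) :: t) = m.natAbs + bsum t := by simp [bsum]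

lemma growth (NK : ℤ) (e1 : Bool) :
    ∀ Lb : List (Bool × ℤ), hasSame e1 Lb →
      NK.natAbs ≤ bsum (shiftC NK e1 Lb) + bsum Lb
  | [] => fun h => absurd h (by simp [hasSame])
  | [(ε, m)] => fun h => by
    have he : ε = e1 := h
    subst he
    show NK.natAbs ≤ bsum [(ε, m + chi NK ε ε)] + bsum [(ε, m)]
    rw [bsum_cons, bsum_cons]
    have h1 : (chi NK ε ε).natAbs = NK.natAbs := by
      rw [chi_same]; cases ε <;> simp
    have h2 : (chi NK ε ε).natAbs ≤ (m + chi NK ε ε).natAbs + m.natAbs := by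
      have := Int.natAbs_sub_le (m + chi NK ε ε) m
      simpa using this
    simp only [bsum, List.map_nil, List.sum_nil, add_zero]
    omega
  | (ε, m) :: (ε', m') :: t => fun h => by
    show NK.natAbs ≤ bsum ((ε, m + chi NK ε ε') :: shiftC NK e1 ((ε', m') :: t))
      + bsum ((ε, m) :: (ε', m') :: t)
    rw [bsum_cons, bsum_cons]
    rcases h with he | hs
    · subst he
      have h1 : (chi NK ε ε).natAbs = NK.natAbs := by
        rw [chi_same]; cases ε <;> simp
      have h2 : (chi NK ε ε).natAbs ≤ (m + chi NK ε ε).natAbs + m.natAbs := by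
        have := Int.natAbs_sub_le (m + chi NK ε ε) m
        simpa using this
      omega
    · have ih := growth NK e1 ((ε', m') :: t) hs
      omega

inductive AltT : List (Bool × ℤ) → Prop
  | nil : AltT []
  | cons (s t : ℤ) (L : List (Bool × ℤ)) : AltT L → AltT ((true, s) :: (false, t) :: L)

lemma phi_fixT (φ : MulAut (FreeGroup (Fin 2))) (k : ℤ)
    (hφa : φ (FreeGroup.of 0) = FreeGroup.of 0 * FreeGroup.of 1 ^ k)
    (hφb : φ (FreeGroup.of 1) = FreeGroup.of 1) :
    ∀ Lb : List (Bool × ℤ), AltT Lb → φ (enc Lb) = enc Lb := by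
  intro Lb h
  induction h with
  | nil => simp
  | cons s t L _ ih =>
    have hz : ∀ m : ℤ, φ (FreeGroup.of 1 ^ m) = FreeGroup.of 1 ^ m := by
      intro m; rw [map_zpow, hφb]
    show φ (FreeGroup.of 0 * FreeGroup.of 1 ^ s *
      ((FreeGroup.of 0)⁻¹ * FreeGroup.of 1 ^ t * enc L)) = _
    rw [map_mul, map_mul, map_mul, map_mul, map_inv, hφa, hz, hz, ih]
    show _ = FreeGroup.of 0 * FreeGroup.of 1 ^ s *
      ((FreeGroup.of 0)⁻¹ * FreeGroup.of 1 ^ t * enc L)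
    group

lemma alt_of_noSame : ∀ Lb : List (Bool × ℤ),
    (∀ p : Bool × ℤ, Lb.head? = some p → p.1 = true) → ¬ hasSame true Lb → AltT Lb
  | [] => fun _ _ => AltT.nil
  | [(ε, m)] => fun hh hns => by
    exfalso
    exact hns (hh (ε, m) rfl)
  | [(ε, m), (ε', m')] => fun hh hns => by
    have he : ε = true := hh _ rfl
    subst he
    have h1 : ¬ (true = ε' ∨ hasSame true [(ε', m')]) := hns
    push_neg at h1
    have he' : ε' = false := by
      cases ε'
      · rfl
      · exact absurd rfl h1.1
    subst he'
    exact AltT.cons m m' [] AltT.nil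
  | (ε, m) :: (ε', m') :: (ε'', m'') :: t => fun hh hns => by
    have he : ε = true := hh _ rfl
    subst he
    have h1 : ¬ (true = ε' ∨ hasSame true ((ε', m') :: (ε'', m'') :: t)) := hns
    push_neg at h1
    have he' : ε' = false := by
      cases ε'
      · rfl
      · exact absurd rfl h1.1
    subst he'
    have h2 : ¬ (false = ε'' ∨ hasSame true ((ε'', m'') :: t)) := h1.2
    push_neg at h2
    have he'' : ε'' = true := by
      cases ε''
      · exact absurd rfl h2.1
      · rfl
    subst he''
    have ih := alt_of_noSame ((true, m'') :: t) (fun p hp => by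
      rw [List.head?_cons, Option.some_inj] at hp; rw [← hp]) h2.2
    exact AltT.cons m m' _ ih

lemma altT_rot : ∀ t : List (Bool × ℤ), t ≠ [] →
    (∀ p : Bool × ℤ, t.head? = some p → p.1 = true) → ¬ hasSame false t →
    ∀ m₀ : ℤ, AltT (t ++ [(false, m₀)])
  | [], h => absurd rfl h
  | [(ε, m)], _ => fun hh _ m₀ => by
    have he : ε = true := hh _ rfl
    subst he
    exact AltT.cons m m₀ [] AltT.nil
  | [(ε, m), (ε', m')], _ => fun hh hns m₀ => by
    exfalso
    have he : ε = true := hh _ rfl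
    subst he
    have h1 : ¬ (true = ε' ∨ hasSame false [(ε', m')]) := hns
    push_neg at h1
    have he' : ε' = false := by
      cases ε'
      · rfl
      · exact absurd rfl h1.1
    subst he'
    exact h1.2 rfl
  | (ε, m) :: (ε', m') :: (ε'', m'') :: t', _ => fun hh hns m₀ => by
    have he : ε = true := hh _ rfl
    subst he
    have h1 : ¬ (true = ε' ∨ hasSame false ((ε', m') :: (ε'', m'') :: t')) := hns
    push_neg at h1
    have he' : ε' = false := by
      cases ε'
      · rfl
      · exact absurd rfl h1.1
    subst he'
    have h2 : ¬ (false = ε'' ∨ hasSame false ((ε'', m'') :: t')) := h1.2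
    push_neg at h2
    have he'' : ε'' = true := by
      cases ε''
      · exact absurd rfl h2.1
      · rfl
    subst he''
    have ih := altT_rot ((true, m'') :: t') (by simp)
      (fun p hp => by rw [List.head?_cons, Option.some_inj] at hp; rw [← hp]) h2.2 m₀
    exact AltT.cons m m' _ ih



end Stmt19

open Stmt19



/-- If `φ` is the automorphism of `F₂ = ⟨a,b⟩` with `aφ = a * b^k`, `bφ = b` (`k ≠ 0`),
`r` is a nonzero integer and `w φ^r` is conjugate to `w` in `F₂`, then `w` is conjugate
in `F₂` to an element fixed by `φ`. -/
theorem stmt19 (k : ℤ) (hk : k ≠ 0) (a b : FreeGroup (Fin 2))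
    (ha : a = FreeGroup.of 0) (hb : b = FreeGroup.of 1)
    (φ : MulAut (FreeGroup (Fin 2))) (hφa : φ a = a * b ^ k) (hφb : φ b = b)
    (r : ℤ) (hr : r ≠ 0) (w : FreeGroup (Fin 2)) (hconj : IsConj ((φ ^ r) w) w) :
    ∃ v : FreeGroup (Fin 2), φ v = v ∧ IsConj w v := by
  subst ha hb
  -- powers of φ on generators
  have hz : ∀ z : ℤ, (φ ^ z) (FreeGroup.of 0) = FreeGroup.of 0 * FreeGroup.of 1 ^ (z * k)
      ∧ (φ ^ z) (FreeGroup.of 1) = FreeGroup.of 1 := by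
    intro z
    induction z using Int.induction_on with
    | zero => simp
    | succ n ih =>
      have hpow : (φ ^ ((n : ℤ) + 1)) = φ ^ (n : ℤ) * φ := zpow_add_one φ n
      constructor
      · rw [hpow, MulAut.mul_apply, hφa, map_mul, map_zpow, ih.1, ih.2,
          mul_assoc, ← zpow_add, show ((n : ℤ) * k + k) = ((n : ℤ) + 1) * k by ring]
      · rw [hpow, MulAut.mul_apply, hφb, ih.2]
    | pred n ih =>
      have hpow : (φ ^ (-(n : ℤ) - 1)) = φ ^ (-(n : ℤ)) * φ⁻¹ := zpow_sub_one φ (-(n : ℤ))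
      have hinv_b : φ⁻¹ (FreeGroup.of 1) = FreeGroup.of 1 := by
        conv_lhs => rw [← hφb]
        rw [show φ⁻¹ = φ.symm from rfl]
        exact φ.symm_apply_apply _
      have hinv_a : φ⁻¹ (FreeGroup.of 0) = FreeGroup.of 0 * FreeGroup.of 1 ^ (-k) := by
        have h1 : φ (FreeGroup.of 0 * FreeGroup.of 1 ^ (-k)) = FreeGroup.of 0 := by
          rw [map_mul, map_zpow, hφa, hφb]
          group
        conv_lhs => rw [← h1]
        rw [show φ⁻¹ = φ.symm from rfl]
        exact φ.symm_apply_apply _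
      constructor
      · rw [hpow, MulAut.mul_apply, hinv_a, map_mul, map_zpow, ih.1, ih.2,
          mul_assoc, ← zpow_add, show (-(n : ℤ) * k + -k) = (-(n : ℤ) - 1) * k by ring]
      · rw [hpow, MulAut.mul_apply, hinv_b, ih.2]
  -- iterated conjugacy
  have hconjN : ∀ n : ℕ, IsConj ((φ ^ (r * ((n : ℤ) + 1))) w) w := by
    intro n
    induction n with
    | zero => simpa using hconj
    | succ n ih =>
      have hsplit : (φ ^ (r * (((n + 1 : ℕ) : ℤ) + 1))) = (φ ^ r) * (φ ^ (r * ((n : ℤ) + 1))) := by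
        rw [← zpow_add]
        congr 1
        push_cast
        ring
      rw [hsplit, MulAut.mul_apply]
      obtain ⟨c, hc⟩ := isConj_iff.mp ih
      have hmap : IsConj ((φ ^ r) ((φ ^ (r * ((n : ℤ) + 1))) w)) ((φ ^ r) w) :=
        isConj_iff.mpr ⟨(φ ^ r) c, by rw [← map_inv, ← map_mul, ← map_mul, hc]⟩
      exact hmap.trans hconj
  -- cyclic reduction
  have hred := red_toWord w
  have hcyc0 : CycRed (core w.toWord) := cycRed_core _ hred
  have hconj0 : IsConj w (FreeGroup.mk (core w.toWord)) := isConj_mk_core w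
  by_cases hall : ∀ p ∈ core w.toWord, p.1 = (1 : Fin 2)
  · exact ⟨FreeGroup.mk (core w.toWord), allb_fixed φ hφb _ hall, hconj0⟩
  push_neg at hall
  obtain ⟨p, hpmem, hp1⟩ := hall
  have hp0 : p.1 = 0 := (fin2_cases p.1).resolve_right hp1
  obtain ⟨l₁, hcyc1, hconj1, hbc1, hhead1⟩ := rotate_ex hcyc0 ⟨p, hpmem, hp0⟩
  have hconjw1 : IsConj w (FreeGroup.mk l₁) := hconj0.trans hconj1
  obtain ⟨Lb, hLbw, hLbc⟩ := parse_ex l₁.length l₁ le_rfl hcyc1.1 hhead1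
  have h2 : FreeGroup.mk l₁ = enc Lb := by rw [← hLbw, mk_blockWord]
  have hLbne : Lb ≠ [] := by
    rintro rfl
    have hl1nil : l₁ = [] := by rw [← hLbw]; rfl
    rw [hl1nil] at hconjw1
    have hw1 : w = 1 := by
      apply isConj_one_left.mp
      rw [show (1 : FreeGroup (Fin 2)) = FreeGroup.mk ([] : List L2) from rfl]
      exact hconjw1
    rw [hw1] at hpmem
    rw [show (1 : FreeGroup (Fin 2)).toWord = [] from FreeGroup.toWord_one] at hpmem
    simp at hpmem
  have hcycQ : ∀ pp qq : Bool × ℤ, Lb.getLast? = some pp → Lb.head? = some qq → Q pp qq := by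
    intro pp qq hg hhq hm0
    have hbl := blockWord_getLast Lb pp hg
    rw [if_pos hm0] at hbl
    have hbh : (blockWord Lb).head? = some (aL qq.1) := by
      cases Lb with
      | nil => simp at hhq
      | cons x t =>
        obtain ⟨εx, mx⟩ := x
        rw [List.head?_cons, Option.some_inj] at hhq
        rw [blockWord_head]
        rw [← hhq]
    rw [hLbw] at hbl hbh
    have hne := hcyc1.2 (aL qq.1) (aL pp.1) hbh hbl
    by_contra hne2
    apply hne
    show aL pp.1 = Invl (aL qq.1)
    rw [show Invl (aL qq.1) = ((0 : Fin 2), !qq.1) from rfl, aL]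
    have : pp.1 = !qq.1 := by
      cases hq : qq.1 <;> cases hp : pp.1 <;> simp_all
    rw [this]
  have hmuw : mu w = bsum Lb := by
    rw [mu_isConj hconjw1, h2, mu_enc hLbc hcycQ]
  cases Lb with
  | nil => exact absurd rfl hLbne
  | cons x t =>
  obtain ⟨ε₁, m₁⟩ := x
  by_cases hsame : hasSame ε₁ ((ε₁, m₁) :: t)
  · -- growth contradiction
    exfalso
    set B : ℕ := bsum ((ε₁, m₁) :: t) with hB
    set N : ℤ := r * (((2 * B : ℕ) : ℤ) + 1) with hN
    set NK : ℤ := N * k with hNK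
    have hψa := (hz N).1
    have hψb := (hz N).2
    have hpsi := psi_enc (φ ^ N) NK hψa hψb ((ε₁, m₁) :: t)
    have hoc := encOC NK ε₁ ((ε₁, m₁) :: t) (by simp)
    have hpre : pre NK ((ε₁, m₁) :: t) = -(if ε₁ then 0 else NK) := by
      cases ε₁ <;> simp [pre]
    have hconj2 : IsConj ((φ ^ N) (enc ((ε₁, m₁) :: t))) (enc (shiftC NK ε₁ ((ε₁, m₁) :: t))) := by
      rw [hpsi, hoc, hpre]
      exact (isConj_iff.mpr ⟨(FreeGroup.of 1) ^ (-(if ε₁ then 0 else NK)), by group⟩).symm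
    have hconj4 : IsConj ((φ ^ N) (enc ((ε₁, m₁) :: t))) ((φ ^ N) w) := by
      have hx : IsConj (enc ((ε₁, m₁) :: t)) w := (h2 ▸ hconjw1).symm
      obtain ⟨c, hc⟩ := isConj_iff.mp hx
      exact isConj_iff.mpr ⟨(φ ^ N) c, by rw [← map_inv, ← map_mul, ← map_mul, hc]⟩
    have hconj5 : IsConj (enc (shiftC NK ε₁ ((ε₁, m₁) :: t))) w :=
      hconj2.symm.trans (hconj4.trans (hconjN (2 * B)))
    -- validity of shifted list
    have hchainS : List.Chain' Q (shiftC NK ε₁ ((ε₁, m₁) :: t)) := shiftC_chain NK ε₁ _ hLbc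
    have hcycS : ∀ pp qq : Bool × ℤ, (shiftC NK ε₁ ((ε₁, m₁) :: t)).getLast? = some pp →
        (shiftC NK ε₁ ((ε₁, m₁) :: t)).head? = some qq → Q pp qq := by
      intro pp qq hg hhq hm0
      obtain ⟨pl, hpl⟩ : ∃ pl : Bool × ℤ, ((ε₁, m₁) :: t).getLast? = some pl := by
        cases hgg : ((ε₁, m₁) :: t).getLast? with
        | none => simp at hgg
        | some z => exact ⟨z, rfl⟩
      obtain ⟨εn, mn⟩ := pl
      have hgl := shiftC_getLast NK ε₁ ((ε₁, m₁) :: t) εn mn hpl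
      rw [hg, Option.some_inj] at hgl
      obtain ⟨mm, hmm⟩ := shiftC_head NK ε₁ ((ε₁, m₁) :: t) (ε₁, m₁) rfl
      rw [hhq, Option.some_inj] at hmm
      subst hgl
      subst hmm
      show ε₁ = εn
      have hm0' : mn + chi NK εn ε₁ = 0 := hm0
      by_cases hee : εn = ε₁
      · exact hee.symm
      · exfalso
        have hc0 : chi NK εn ε₁ = 0 := chi_mixed (fun hx => hee hx.symm)
        rw [hc0, add_zero] at hm0'
        exact hee ((hcycQ (εn, mn) (ε₁, m₁) hpl rfl hm0').symm)
    have hmu2 : mu (enc (shiftC NK ε₁ ((ε₁, m₁) :: t))) = bsum (shiftC NK ε₁ ((ε₁, m₁) :: t)) :=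
      mu_enc hchainS hcycS
    have heq : bsum (shiftC NK ε₁ ((ε₁, m₁) :: t)) = B := by
      rw [← hmu2, mu_isConj hconj5]
      exact hmuw
    have hgrow := growth NK ε₁ ((ε₁, m₁) :: t) hsame
    rw [heq] at hgrow
    -- NK.natAbs ≤ 2B but NK.natAbs ≥ 2B+1
    have h1 : 1 ≤ r.natAbs := Int.natAbs_pos.mpr hr
    have h1k : 1 ≤ k.natAbs := Int.natAbs_pos.mpr hk
    have hNKabs : NK.natAbs = r.natAbs * (2 * B + 1) * k.natAbs := by
      rw [hNK, hN, Int.natAbs_mul, Int.natAbs_mul]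
      have hmid : (((2 * B : ℕ) : ℤ) + 1).natAbs = 2 * B + 1 := by omega
      rw [hmid]
    have : 2 * B + 1 ≤ NK.natAbs := by
      rw [hNKabs]
      calc 2 * B + 1 = 1 * (2 * B + 1) * 1 := by ring
        _ ≤ r.natAbs * (2 * B + 1) * k.natAbs := by
            apply Nat.mul_le_mul
            · exact Nat.mul_le_mul h1 le_rfl
            · exact h1k
    omega
  · -- alternating case
    cases hε : ε₁ with
    | true =>
      subst hε
      have halt : AltT ((true, m₁) :: t) :=
        alt_of_noSame _ (fun p hp => by
          rw [List.head?_cons, Option.some_inj] at hp; rw [← hp]) hsame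
      refine ⟨enc ((true, m₁) :: t), phi_fixT φ k hφa hφb _ halt, ?_⟩
      rw [← h2]
      exact hconjw1
    | false =>
      subst hε
      cases t with
      | nil => exact absurd (show hasSame false [(false, m₁)] from rfl) hsame
      | cons x2 t' =>
        obtain ⟨ε₂, m₂⟩ := x2
        have hns : ¬ (false = ε₂ ∨ hasSame false ((ε₂, m₂) :: t')) := hsame
        push_neg at hns
        have hε₂ : ε₂ = true := by
          cases ε₂
          · exact absurd rfl hns.1
          · rfl
        subst hε₂
        have halt : AltT (((true, m₂) :: t') ++ [(false, m₁)]) :=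
          altT_rot _ (by simp) (fun p hp => by
            rw [List.head?_cons, Option.some_inj] at hp; rw [← hp]) hns.2 m₁
        refine ⟨enc (((true, m₂) :: t') ++ [(false, m₁)]),
          phi_fixT φ k hφa hφb _ halt, ?_⟩
        have hrot : IsConj (enc ((false, m₁) :: (true, m₂) :: t'))
            (enc (((true, m₂) :: t') ++ [(false, m₁)])) := by
          have e1 : enc ((false, m₁) :: (true, m₂) :: t') =
              enc [(false, m₁)] * enc ((true, m₂) :: t') := by
            rw [← enc_append]
            rfl
          have e2 : enc (((true, m₂) :: t') ++ [(false, m₁)]) =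
              enc ((true, m₂) :: t') * enc [(false, m₁)] := enc_append _ _
          rw [e1, e2]
          exact isConj_iff.mpr ⟨enc ((true, m₂) :: t'), by group⟩
        rw [← h2] at hrot
        exact hconjw1.trans hrot
end
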